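/- arXiv:0906.1832 — 6 statements merged into one kernel-verified Lean document; each statement's English description precedes it below -/
import Mathlib

section
/- Let n ≥ 1, let I = {i_1 < i_2 < … < i_l} be a subset of {1,…,n−1}, and set i_0 := 0 and i_{l+1} := n. Then for every natural number q, (∑_{w ∈ S_n with Des(w) ⊆ I} q^{inv(w)}) · ∏_{k=1}^{l+1} ∏_{j=1}^{i_k − i_{k−1}} (q^j − 1) = ∏_{j=1}^{n} (q^j − 1), as an identity of integers. (Equivalently, the sum ∑_{w ∈ S_n, Des(w) ⊆ I} q^{ℓ(w)} equals the Gaussian multinomial coefficient binom(n, I)_q.) -/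
open Finset

/-- The value of the permutation `w` of `{0, …, n-1}` at a natural number `i`,
extended by the identity outside the range. -/
def permVal {n : ℕ} (w : Equiv.Perm (Fin n)) (i : ℕ) : ℕ :=
  if h : i < n then (w ⟨i, h⟩ : ℕ) else i

/-- The inversion number (Coxeter length) of a permutation of `{0, …, n-1}`:
the number of pairs `a < b` with `w a > w b`. -/
def invNum {n : ℕ} (w : Equiv.Perm (Fin n)) : ℕ :=
  (Finset.univ.filter fun q : Fin n × Fin n => q.1 < q.2 ∧ w q.2 < w q.1).card

/-- The descent set of a permutation, in the `1`-indexed convention of the paper: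
`Des(w) = {i ∈ {1,…,n-1} : w(i) > w(i+1)}`, where positions `1,…,n` of the paper
correspond to the indices `0,…,n-1` of `Fin n`. -/
def descSet {n : ℕ} (w : Equiv.Perm (Fin n)) : Finset ℕ :=
  (Finset.Icc 1 (n - 1)).filter fun i => permVal w i < permVal w (i - 1)

/-- `∏_{j=1}^{m} (q^j - 1)`. -/
def qFactProd (q m : ℕ) : ℤ :=
  ∏ j ∈ Finset.Icc 1 m, ((q : ℤ) ^ j - 1)

/-- Given `I = {i_1 < … < i_l} ⊆ {1,…,n-1}`, with `i_0 := 0` and `i_{l+1} := n`, this is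
`∏_{k=1}^{l+1} ∏_{j=1}^{i_k - i_{k-1}} (q^j - 1)`, the denominator of the Gaussian
multinomial coefficient `binom(n, I)_q` with denominators cleared. -/
def gaussDen (q n : ℕ) (I : Finset ℕ) : ℤ :=
  let js : List ℕ := (insert n I).sort (· ≤ ·)
  ((js.zip (0 :: js)).map fun ab => qFactProd q (ab.1 - ab.2)).prod



lemma qFactProd_zero (q : ℕ) : qFactProd q 0 = 1 := by simp [qFactProd]

lemma qFactProd_succ (q m : ℕ) :
    qFactProd q (m + 1) = qFactProd q m * ((q : ℤ) ^ (m + 1) - 1) := by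
  unfold qFactProd
  rw [← Finset.Ico_add_one_right_eq_Icc, ← Finset.Ico_add_one_right_eq_Icc, Finset.prod_Ico_succ_top (by omega)]

lemma sort_insert_max {s : Finset ℕ} {a : ℕ} (h : ∀ x ∈ s, x < a) :
    (insert a s).sort (· ≤ ·) = s.sort (· ≤ ·) ++ [a] := by
  have ha : a ∉ s := fun hh => lt_irrefl a (h a hh)
  have hp : List.Perm ((insert a s).sort (· ≤ ·)) (s.sort (· ≤ ·) ++ [a]) := by
    refine ((Finset.sort_perm_toList (insert a s) _).trans ?_).trans
      (List.perm_append_singleton a _).symm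
    refine (Finset.toList_insert ha).trans ?_
    exact List.Perm.cons a (Finset.sort_perm_toList s _).symm
  have h2 : List.Pairwise (· ≤ ·) (s.sort (· ≤ ·) ++ [a]) := by
    rw [List.pairwise_append]
    refine ⟨Finset.pairwise_sort _ _, List.pairwise_singleton _ a, ?_⟩
    intro x hx y hy
    rw [List.mem_singleton] at hy
    subst hy
    exact le_of_lt (h x ((Finset.mem_sort _).mp hx))
  exact List.Perm.eq_of_pairwise' (Finset.pairwise_sort _ _) h2 hp


lemma zip_append_single (L : List ℕ) (a : ℕ) :
    ∀ c : ℕ, (L ++ [a]).zip (c :: (L ++ [a])) = L.zip (c :: L) ++ [(a, L.getLastD c)] := by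
  induction L with
  | nil => intro c; rfl
  | cons x xs ih =>
      intro c
      simp only [List.cons_append, List.zip_cons_cons, ih x, List.getLastD_cons]

lemma gaussDen_empty (q n : ℕ) : gaussDen q n ∅ = qFactProd q n := by
  simp [gaussDen, Finset.sort_singleton, List.zip_cons_cons]

lemma gaussDen_step (q n m : ℕ) (I : Finset ℕ) (hmI : m ∈ I) (hmn : m < n)
    (hmax : ∀ x ∈ I, x ≤ m) :
    gaussDen q n I = gaussDen q m (I.erase m) * qFactProd q (n - m) := by
  have h1 : (insert n I).sort (· ≤ ·) = I.sort (· ≤ ·) ++ [n] :=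
    sort_insert_max (fun x hx => lt_of_le_of_lt (hmax x hx) hmn)
  have hIm : I = insert m (I.erase m) := (Finset.insert_erase hmI).symm
  have h2 : I.sort (· ≤ ·) = (I.erase m).sort (· ≤ ·) ++ [m] := by
    conv_lhs => rw [hIm]
    exact sort_insert_max (fun x hx => lt_of_le_of_ne (hmax x (Finset.mem_of_mem_erase hx))
      (Finset.ne_of_mem_erase hx))
  have h3 : (insert m (I.erase m)).sort (· ≤ ·) = (I.erase m).sort (· ≤ ·) ++ [m] := by
    rw [← hIm]; exact h2
  have hlast : (I.sort (· ≤ ·)).getLastD 0 = m := by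
    rw [h2]; simp
  unfold gaussDen
  simp only [h1, h3, hIm.symm, zip_append_single, hlast, List.map_append, List.prod_append,
    List.map_cons, List.map_nil, List.prod_cons, List.prod_nil, mul_one]

/-- weight of a subset: number of "cross inversions" -/
def wtN (T : Finset ℕ) : ℕ := ∑ x ∈ T, ((Finset.range x).filter (· ∉ T)).card

lemma wtN_empty : wtN ∅ = 0 := by simp [wtN]

lemma wtN_full (n : ℕ) : wtN (Finset.range n) = 0 := by
  unfold wtN
  refine Finset.sum_eq_zero fun x hx => ?_
  rw [Finset.card_eq_zero, Finset.filter_eq_empty_iff]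
  intro y hy
  simp only [Finset.mem_range] at hx hy ⊢
  simp only [not_not, Finset.mem_range]
  omega

lemma wtN_insert_top (n : ℕ) (T : Finset ℕ) (hT : T ⊆ Finset.range n) :
    wtN (insert n T) = wtN T + (n - T.card) := by
  have hnT : n ∉ T := fun h => by simpa using hT h
  unfold wtN
  rw [Finset.sum_insert hnT]
  have h1 : ((Finset.range n).filter (· ∉ insert n T)).card = n - T.card := by
    have : (Finset.range n).filter (· ∉ insert n T) = (Finset.range n) \ T := by
      ext y
      simp only [Finset.mem_filter, Finset.mem_sdiff, Finset.mem_insert, Finset.mem_range]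
      constructor
      · rintro ⟨hy, h2⟩; exact ⟨hy, fun hyT => h2 (Or.inr hyT)⟩
      · rintro ⟨hy, h2⟩; exact ⟨hy, by rintro (rfl | hyT) <;> [omega; exact h2 hyT]⟩
    rw [this, Finset.card_sdiff_of_subset hT, Finset.card_range]
  have h2 : ∀ x ∈ T, ((Finset.range x).filter (· ∉ insert n T)).card
      = ((Finset.range x).filter (· ∉ T)).card := by
    intro x hx
    congr 1
    apply Finset.filter_congr
    intro y hy
    have hxn : x < n := by simpa using hT hx
    have hyn : y ≠ n := by simp only [Finset.mem_range] at hy; omega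
    simp [Finset.mem_insert, hyn]
  rw [Finset.sum_congr rfl h2, h1, add_comm]

def gSum (q n m : ℕ) : ℤ := ∑ T ∈ Finset.powersetCard m (Finset.range n), (q : ℤ) ^ wtN T

lemma gSum_key (q : ℕ) : ∀ n m : ℕ, m ≤ n →
    gSum q n m * qFactProd q m * qFactProd q (n - m) = qFactProd q n := by
  intro n
  induction n with
  | zero =>
      intro m hm
      interval_cases m
      simp [gSum, wtN_empty, qFactProd_zero]
  | succ n ih =>
      intro m hm
      rcases Nat.eq_zero_or_pos m with rfl | hm0
      · simp [gSum, wtN_empty, qFactProd_zero]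
      obtain ⟨m', rfl⟩ : ∃ m', m = m' + 1 := ⟨m - 1, by omega⟩
      have hsplit : gSum q (n+1) (m'+1)
          = gSum q n (m'+1) + (q : ℤ) ^ (n - m') * gSum q n m' := by
        unfold gSum
        rw [show Finset.range (n+1) = insert n (Finset.range n) by
          rw [Finset.range_add_one]]
        rw [Finset.powersetCard_succ_insert (by simp)]
        rw [Finset.sum_union, Finset.sum_image]
        · congr 1
          rw [Finset.mul_sum]
          refine Finset.sum_congr rfl fun T hT => ?_
          simp only [Finset.mem_powersetCard] at hT
          rw [wtN_insert_top n T hT.1, hT.2, pow_add, mul_comm]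
        · intro S hS T hT hST
          simp only [Finset.mem_coe, Finset.mem_powersetCard] at hS hT
          have hnS : n ∉ S := fun h => by simpa using hS.1 h
          have hnT : n ∉ T := fun h => by simpa using hT.1 h
          rw [← Finset.erase_insert hnS, ← Finset.erase_insert hnT, hST]
        · rw [Finset.disjoint_left]
          intro S hS hS2
          simp only [Finset.mem_powersetCard] at hS
          have : n ∉ S := fun h => by simpa using hS.1 h
          simp only [Finset.mem_image] at hS2
          obtain ⟨T, _, rfl⟩ := hS2
          exact this (Finset.mem_insert_self n T)
      rcases Nat.lt_or_ge n (m' + 1) with hnm | hnm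
      · -- m' = n, full set
        have hm'n : m' = n := by omega
        subst hm'n
        have h1 : gSum q (m'+1) (m'+1) = 1 := by
          unfold gSum
          have hps := Finset.powersetCard_self (Finset.range (m'+1))
          rw [Finset.card_range] at hps
          rw [hps, Finset.sum_singleton, wtN_full, pow_zero]
        rw [h1, Nat.sub_self, qFactProd_zero, one_mul, mul_one]
      · obtain ⟨k, rfl⟩ : ∃ k, n = m' + 1 + k := ⟨n - m' - 1, by omega⟩
        have key1 := ih (m' + 1) (by omega)
        have key2 := ih m' (by omega)
        have e1 : m' + 1 + k - m' = k + 1 := by omega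
        have e2 : m' + 1 + k - (m' + 1) = k := by omega
        have e3 : m' + 1 + k + 1 - (m' + 1) = k + 1 := by omega
        rw [e1] at hsplit
        rw [e2] at key1
        rw [e1] at key2
        rw [hsplit, e3, qFactProd_succ q k, qFactProd_succ q m',
          qFactProd_succ q (m' + 1 + k)]
        rw [qFactProd_succ q m'] at key1
        rw [qFactProd_succ q k] at key2
        linear_combination ((q:ℤ) ^ (k+1) - 1) * key1
          + (q:ℤ) ^ (k+1) * ((q:ℤ) ^ (m'+1) - 1) * key2


lemma permVal_of_lt {n : ℕ} (w : Equiv.Perm (Fin n)) {i : ℕ} (h : i < n) :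
    permVal w i = (w ⟨i, h⟩ : ℕ) := dif_pos h

lemma mem_descSet_iff {n : ℕ} (w : Equiv.Perm (Fin n)) {i : ℕ} :
    i ∈ descSet w ↔ 1 ≤ i ∧ i ≤ n - 1 ∧ permVal w i < permVal w (i - 1) := by
  simp [descSet, Finset.mem_filter, Finset.mem_Icc, and_assoc]

lemma descSet_empty_eq_one {n : ℕ} {w : Equiv.Perm (Fin n)} (h : descSet w ⊆ ∅) : w = 1 := by
  have hsm : StrictMono w := by
    cases n with
    | zero => intro a; exact absurd a.2 (by omega)
    | succ n' =>
        rw [Fin.strictMono_iff_lt_succ]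
        intro i
        have hi1 : (i : ℕ) + 1 < n' + 1 := by omega
        by_contra hle
        push_neg at hle
        have hne : w i.succ ≠ w (Fin.castSucc i) := by
          intro he
          exact absurd (w.injective he) (by
            intro h2
            have := congrArg Fin.val h2
            simp [Fin.val_succ, Fin.coe_castSucc] at this)
        have hlt : w i.succ < w (Fin.castSucc i) := lt_of_le_of_ne hle hne
        have : (i : ℕ) + 1 ∈ descSet w := by
          rw [mem_descSet_iff]
          refine ⟨by omega, by omega, ?_⟩
          rw [permVal_of_lt w hi1, permVal_of_lt w (by omega : (i:ℕ) + 1 - 1 < n' + 1)]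
          have e1 : (⟨(i:ℕ) + 1, hi1⟩ : Fin (n'+1)) = i.succ := rfl
          have e2 : (⟨(i:ℕ) + 1 - 1, by omega⟩ : Fin (n'+1)) = Fin.castSucc i := by
            apply Fin.ext; simp
          rw [e1, e2]
          exact_mod_cast hlt
        exact absurd (h this) (Finset.notMem_empty _)
  have : ⇑w = id := by
    have hid : StrictMono (id : Fin n → Fin n) := strictMono_id
    have hr : Set.range ⇑w = Set.range (id : Fin n → Fin n) := by
      rw [Set.range_id, w.surjective.range_eq]
    exact (hsm.range_inj hid).mp hr
  ext j
  exact congrArg Fin.val (congrFun this j)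

lemma invNum_one {n : ℕ} : invNum (1 : Equiv.Perm (Fin n)) = 0 := by
  unfold invNum
  rw [Finset.card_eq_zero, Finset.filter_eq_empty_iff]
  rintro ⟨a, b⟩ _
  simp only [Equiv.Perm.one_apply, not_and]
  intro h1 h2
  exact absurd h1 (not_lt.2 (le_of_lt h2))

section Block

variable {n m : ℕ}

lemma card_compl_fin {S : Finset (Fin n)} (hS : S.card = m) : Sᶜ.card = n - m := by
  rw [Finset.card_compl, hS, Fintype.card_fin]

/-- The function underlying `blockPerm`. -/
def blockFun (S : Finset (Fin n)) (v : Equiv.Perm (Fin m)) (hS : S.card = m) (hm : m ≤ n) :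
    Fin n → Fin n := fun j =>
  if hj : (j : ℕ) < m then S.orderEmbOfFin hS (v ⟨j, hj⟩)
  else Sᶜ.orderEmbOfFin (card_compl_fin hS) ⟨(j : ℕ) - m, by have := j.2; omega⟩

lemma blockFun_mem_iff {S : Finset (Fin n)} {v : Equiv.Perm (Fin m)} (hS : S.card = m)
    (hm : m ≤ n) (j : Fin n) : blockFun S v hS hm j ∈ S ↔ (j : ℕ) < m := by
  unfold blockFun
  by_cases hj : (j : ℕ) < m
  · simp only [dif_pos hj]
    exact iff_of_true (Finset.orderEmbOfFin_mem _ _ _) hj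
  · simp only [dif_neg hj]
    refine iff_of_false (fun hmem => ?_) hj
    have := Finset.orderEmbOfFin_mem Sᶜ (card_compl_fin hS) ⟨(j : ℕ) - m, by have := j.2; omega⟩
    rw [Finset.mem_compl] at this
    exact this hmem

lemma blockFun_injective {S : Finset (Fin n)} {v : Equiv.Perm (Fin m)} (hS : S.card = m)
    (hm : m ≤ n) : Function.Injective (blockFun S v hS hm) := by
  intro a b hab
  have hmem := hab ▸ (blockFun_mem_iff hS hm a)
  rw [blockFun_mem_iff hS hm b] at hmem
  unfold blockFun at hab
  by_cases ha : (a : ℕ) < m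
  · have hb : (b : ℕ) < m := hmem.mpr ha
    rw [dif_pos ha, dif_pos hb] at hab
    have := v.injective ((S.orderEmbOfFin hS).injective hab)
    have := congrArg Fin.val this
    simp only at this
    exact Fin.ext this
  · have hb : ¬ (b : ℕ) < m := fun h => ha (hmem.mp h)
    rw [dif_neg ha, dif_neg hb] at hab
    have := (Sᶜ.orderEmbOfFin (card_compl_fin hS)).injective hab
    have := congrArg Fin.val this
    simp only at this
    apply Fin.ext
    omega

/-- The permutation of `Fin n` built from an `m`-subset `S` (values of the first block)
and a permutation `v` of `Fin m`; positions `≥ m` get the values of `Sᶜ` in increasing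
order. Defaults to `1` if the cardinality hypotheses fail. -/
noncomputable def blockPerm (m : ℕ) (S : Finset (Fin n)) (v : Equiv.Perm (Fin m)) : Equiv.Perm (Fin n) :=
  if h : S.card = m ∧ m ≤ n then
    Equiv.ofBijective (blockFun S v h.1 h.2)
      (Finite.injective_iff_bijective.mp (blockFun_injective h.1 h.2))
  else 1

lemma blockPerm_apply {S : Finset (Fin n)} {v : Equiv.Perm (Fin m)} (hS : S.card = m)
    (hm : m ≤ n) (j : Fin n) : blockPerm m S v j = blockFun S v hS hm j := by
  unfold blockPerm
  rw [dif_pos ⟨hS, hm⟩]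
  rfl

lemma blockPerm_apply_lt {S : Finset (Fin n)} {v : Equiv.Perm (Fin m)} (hS : S.card = m)
    (hm : m ≤ n) {j : Fin n} (hj : (j : ℕ) < m) :
    blockPerm m S v j = S.orderEmbOfFin hS (v ⟨j, hj⟩) := by
  rw [blockPerm_apply hS hm]; unfold blockFun; rw [dif_pos hj]

lemma blockPerm_apply_ge {S : Finset (Fin n)} {v : Equiv.Perm (Fin m)} (hS : S.card = m)
    (hm : m ≤ n) {j : Fin n} (hj : ¬ (j : ℕ) < m) :
    blockPerm m S v j = Sᶜ.orderEmbOfFin (card_compl_fin hS) ⟨(j : ℕ) - m,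
      by have := j.2; omega⟩ := by
  rw [blockPerm_apply hS hm]; unfold blockFun; rw [dif_neg hj]

lemma blockPerm_mem_iff {S : Finset (Fin n)} {v : Equiv.Perm (Fin m)} (hS : S.card = m)
    (hm : m ≤ n) (j : Fin n) : blockPerm m S v j ∈ S ↔ (j : ℕ) < m := by
  rw [blockPerm_apply hS hm]; exact blockFun_mem_iff hS hm j

end Block

/-- number of cross inversions of the subset `S`. -/
def crossNum {n : ℕ} (S : Finset (Fin n)) : ℕ :=
  ∑ x ∈ S, (Finset.univ.filter fun y : Fin n => y < x ∧ y ∉ S).card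

section InvCount

variable {n m : ℕ} {S : Finset (Fin n)} {v : Equiv.Perm (Fin m)}

lemma blockPerm_lt_first {hS : S.card = m} {hm : m ≤ n} {j : Fin n} (hj : ¬ (j:ℕ) < m)
    {j' : Fin n} (hj' : ¬ (j':ℕ) < m) (hlt : j < j') :
    blockPerm m S v j < blockPerm m S v j' := by
  rw [blockPerm_apply_ge hS hm hj, blockPerm_apply_ge hS hm hj']
  apply (Sᶜ.orderEmbOfFin (card_compl_fin hS)).strictMono
  rw [Fin.mk_lt_mk]
  have := Fin.lt_iff_val_lt_val.mp hlt
  omega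

lemma invNum_blockPerm (hS : S.card = m) (hm : m ≤ n) :
    invNum (blockPerm m S v) = invNum v + crossNum S := by
  set w := blockPerm m S v with hw
  have hsplit := Finset.card_filter_add_card_filter_not
    (s := Finset.univ.filter fun p : Fin n × Fin n => p.1 < p.2 ∧ w p.2 < w p.1)
    (p := fun p : Fin n × Fin n => (p.2 : ℕ) < m)
  have h1 : ((Finset.univ.filter fun p : Fin n × Fin n => p.1 < p.2 ∧ w p.2 < w p.1).filter
      fun p => (p.2 : ℕ) < m).card = invNum v := by
    apply Finset.card_bij (fun p hp =>
      ((⟨(p.1 : ℕ), by have h2 := (Finset.mem_filter.mp hp).2; have h1 := (Finset.mem_filter.mp (Finset.mem_filter.mp hp).1).2.1; have := Fin.lt_iff_val_lt_val.mp h1; omega⟩ : Fin m),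
       (⟨(p.2 : ℕ), (Finset.mem_filter.mp hp).2⟩ : Fin m)))
    · intro p hp
      have h2m := (Finset.mem_filter.mp hp).2
      obtain ⟨hlt, hinv⟩ := (Finset.mem_filter.mp (Finset.mem_filter.mp hp).1).2
      have h1m : (p.1 : ℕ) < m := by have := Fin.lt_iff_val_lt_val.mp hlt; omega
      simp only [Finset.mem_filter, Finset.mem_univ, true_and]
      refine ⟨Fin.lt_iff_val_lt_val.mpr (Fin.lt_iff_val_lt_val.mp hlt), ?_⟩
      rw [blockPerm_apply_lt hS hm h1m, blockPerm_apply_lt hS hm h2m] at hinv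
      have := (S.orderEmbOfFin hS).lt_iff_lt.mp hinv
      convert this using 2 <;> exact (Fin.ext rfl : (⟨(p.1:ℕ), h1m⟩ : Fin m) = _) ▸ rfl
    · intro p hp p' hp' he
      have h1 := congrArg (fun x => (x.1 : ℕ)) he
      have h2 := congrArg (fun x => (x.2 : ℕ)) he
      simp only at h1 h2
      exact Prod.ext (Fin.ext h1) (Fin.ext h2)
    · intro b hb
      simp only [Finset.mem_filter, Finset.mem_univ, true_and] at hb
      refine ⟨(Fin.castLE hm b.1, Fin.castLE hm b.2), ?_, ?_⟩
      · have hb1 : ((Fin.castLE hm b.1 : Fin n) : ℕ) < m := b.1.2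
        have hb2 : ((Fin.castLE hm b.2 : Fin n) : ℕ) < m := b.2.2
        simp only [Finset.mem_filter, Finset.mem_univ, true_and]
        refine ⟨⟨Fin.lt_iff_val_lt_val.mpr (Fin.lt_iff_val_lt_val.mp hb.1), ?_⟩, hb2⟩
        rw [blockPerm_apply_lt hS hm hb1, blockPerm_apply_lt hS hm hb2]
        apply (S.orderEmbOfFin hS).strictMono
        have e1 : (⟨((Fin.castLE hm b.1 : Fin n) : ℕ), hb1⟩ : Fin m) = b.1 := Fin.ext rfl
        have e2 : (⟨((Fin.castLE hm b.2 : Fin n) : ℕ), hb2⟩ : Fin m) = b.2 := Fin.ext rfl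
        rw [e1, e2]
        exact hb.2
      · apply Prod.ext <;> exact Fin.ext rfl
  have h2 : ((Finset.univ.filter fun p : Fin n × Fin n => p.1 < p.2 ∧ w p.2 < w p.1).filter
      fun p => ¬ (p.2 : ℕ) < m).card = crossNum S := by
    rw [crossNum, ← Finset.card_sigma]
    apply Finset.card_bij (fun p _ => (⟨w p.1, w p.2⟩ : Σ _ : Fin n, Fin n))
    · intro p hp
      have h2m := (Finset.mem_filter.mp hp).2
      obtain ⟨hlt, hinv⟩ := (Finset.mem_filter.mp (Finset.mem_filter.mp hp).1).2
      have h1m : (p.1 : ℕ) < m := by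
        by_contra h1m
        exact absurd (blockPerm_lt_first (hS := hS) (hm := hm) (v := v) h1m h2m hlt)
          (not_lt.mpr (le_of_lt hinv))
      rw [Finset.mem_sigma, Finset.mem_filter]
      refine ⟨(blockPerm_mem_iff hS hm p.1).mpr h1m, Finset.mem_univ _, hinv, ?_⟩
      intro hmem
      exact absurd ((blockPerm_mem_iff hS hm p.2).mp hmem) h2m
    · intro p hp p' hp' he
      have h1 : w p.1 = w p'.1 := congrArg Sigma.fst he
      have h2 : w p.2 = w p'.2 := by
        have := congrArg Sigma.snd he
        simpa using this
      exact Prod.ext (w.injective h1) (w.injective h2)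
    · intro b hb
      rw [Finset.mem_sigma, Finset.mem_filter] at hb
      obtain ⟨hx, -, hyx, hyS⟩ := hb
      have h1 : (w.symm b.1 : ℕ) < m := by
        rw [← blockPerm_mem_iff hS hm (w.symm b.1) (v := v), ← hw, Equiv.apply_symm_apply]
        exact hx
      have h2 : ¬ (w.symm b.2 : ℕ) < m := by
        rw [← blockPerm_mem_iff hS hm (w.symm b.2) (v := v), ← hw, Equiv.apply_symm_apply]
        exact hyS
      refine ⟨(w.symm b.1, w.symm b.2), ?_, ?_⟩
      · simp only [Finset.mem_filter, Finset.mem_univ, true_and, Equiv.apply_symm_apply]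
        exact ⟨⟨Fin.lt_iff_val_lt_val.mpr (by omega), hyx⟩, h2⟩
      · simp only [Equiv.apply_symm_apply]
  rw [invNum, ← hsplit, h1, h2, invNum]

end InvCount

lemma crossNum_eq_wtN {n : ℕ} (S : Finset (Fin n)) : crossNum S = wtN (S.image Fin.val) := by
  unfold crossNum wtN
  rw [Finset.sum_image (fun x _ y _ h => Fin.val_injective h)]
  refine Finset.sum_congr rfl fun x hx => ?_
  have himg : (Finset.univ.filter fun y : Fin n => y < x ∧ y ∉ S).image Fin.val
      = (Finset.range (x : ℕ)).filter (· ∉ S.image Fin.val) := by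
    ext y
    simp only [Finset.mem_image, Finset.mem_filter, Finset.mem_univ, true_and,
      Finset.mem_range]
    constructor
    · rintro ⟨z, ⟨hzx, hzS⟩, rfl⟩
      refine ⟨Fin.lt_iff_val_lt_val.mp hzx, ?_⟩
      rintro ⟨z', hz', hzz'⟩
      exact hzS (Fin.val_injective hzz' ▸ hz')
    · rintro ⟨hyx, hyS⟩
      have hyn : y < n := lt_trans hyx x.2
      exact ⟨⟨y, hyn⟩, ⟨Fin.lt_iff_val_lt_val.mpr hyx, fun hc => hyS ⟨⟨y, hyn⟩, hc, rfl⟩⟩, rfl⟩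
  rw [← himg, Finset.card_image_of_injective _ Fin.val_injective]

lemma sum_crossNum_eq_gSum (q n m : ℕ) :
    ∑ S ∈ Finset.powersetCard m (Finset.univ : Finset (Fin n)), (q : ℤ) ^ crossNum S
      = gSum q n m := by
  unfold gSum
  apply Finset.sum_bij (fun S _ => S.image Fin.val)
  · intro S hS
    rw [Finset.mem_powersetCard] at hS ⊢
    refine ⟨fun y hy => ?_, by rw [Finset.card_image_of_injective _ Fin.val_injective, hS.2]⟩
    obtain ⟨z, _, rfl⟩ := Finset.mem_image.mp hy
    exact Finset.mem_range.mpr z.2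
  · intro S hS T hT he
    exact Finset.image_injective Fin.val_injective he
  · intro T hT
    rw [Finset.mem_powersetCard] at hT
    refine ⟨Finset.univ.filter (fun j : Fin n => (j : ℕ) ∈ T), ?_, ?_⟩
    · rw [Finset.mem_powersetCard]
      have himg : (Finset.univ.filter (fun j : Fin n => (j : ℕ) ∈ T)).image Fin.val = T := by
        ext y
        simp only [Finset.mem_image, Finset.mem_filter, Finset.mem_univ, true_and]
        constructor
        · rintro ⟨z, hz, rfl⟩; exact hz
        · intro hy
          have hyn : y < n := Finset.mem_range.mp (hT.1 hy)
          exact ⟨⟨y, hyn⟩, hy, rfl⟩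
      refine ⟨Finset.subset_univ _, ?_⟩
      have hc := Finset.card_image_of_injective
        (Finset.univ.filter (fun j : Fin n => (j : ℕ) ∈ T)) Fin.val_injective
      rw [himg] at hc
      rw [← hc, hT.2]
    · have himg : (Finset.univ.filter (fun j : Fin n => (j : ℕ) ∈ T)).image Fin.val = T := by
        ext y
        simp only [Finset.mem_image, Finset.mem_filter, Finset.mem_univ, true_and]
        constructor
        · rintro ⟨z, hz, rfl⟩; exact hz
        · intro hy
          have hyn : y < n := Finset.mem_range.mp (hT.1 hy)
          exact ⟨⟨y, hyn⟩, hy, rfl⟩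
      exact himg
  · intro S hS
    rw [crossNum_eq_wtN]

section Desc

variable {n m : ℕ} {S : Finset (Fin n)} {v : Equiv.Perm (Fin m)}

lemma descSet_subset_blockPerm (hS : S.card = m) (hm : m ≤ n) :
    descSet v ⊆ descSet (blockPerm m S v) := by
  intro i hi
  rw [mem_descSet_iff] at hi ⊢
  obtain ⟨h1, h2, h3⟩ := hi
  have him : i < m := by omega
  have him1 : i - 1 < m := by omega
  have hin : i < n := by omega
  have hin1 : i - 1 < n := by omega
  refine ⟨h1, by omega, ?_⟩
  rw [permVal_of_lt _ him, permVal_of_lt _ him1] at h3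
  rw [permVal_of_lt _ hin, permVal_of_lt _ hin1]
  have e1 : (⟨i, hin⟩ : Fin n) = Fin.castLE hm ⟨i, him⟩ := Fin.ext rfl
  have e2 : (⟨i - 1, hin1⟩ : Fin n) = Fin.castLE hm ⟨i - 1, him1⟩ := Fin.ext rfl
  rw [e1, e2, blockPerm_apply_lt hS hm (by exact him), blockPerm_apply_lt hS hm (by exact him1)]
  have hv : v ⟨i, him⟩ < v ⟨i - 1, him1⟩ := Fin.lt_iff_val_lt_val.mpr h3
  have := (S.orderEmbOfFin hS).strictMono hv
  exact Fin.lt_iff_val_lt_val.mp this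

lemma descSet_blockPerm_subset (hS : S.card = m) (hm : m ≤ n) :
    descSet (blockPerm m S v) ⊆ insert m (descSet v) := by
  intro i hi
  rw [mem_descSet_iff] at hi
  obtain ⟨h1, h2, h3⟩ := hi
  have hin : i < n := by omega
  have hin1 : i - 1 < n := by omega
  rw [permVal_of_lt _ hin, permVal_of_lt _ hin1] at h3
  rcases lt_trichotomy i m with him | rfl | hmi
  · -- descent of v
    have him1 : i - 1 < m := by omega
    rw [Finset.mem_insert]
    right
    rw [mem_descSet_iff]
    refine ⟨h1, by omega, ?_⟩
    have e1 : (⟨i, hin⟩ : Fin n) = Fin.castLE hm ⟨i, him⟩ := Fin.ext rfl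
    have e2 : (⟨i - 1, hin1⟩ : Fin n) = Fin.castLE hm ⟨i - 1, him1⟩ := Fin.ext rfl
    rw [e1, e2, blockPerm_apply_lt hS hm (by exact him),
      blockPerm_apply_lt hS hm (by exact him1)] at h3
    rw [permVal_of_lt _ him, permVal_of_lt _ him1]
    have := (S.orderEmbOfFin hS).lt_iff_lt.mp (Fin.lt_iff_val_lt_val.mpr h3)
    exact Fin.lt_iff_val_lt_val.mp this
  · exact Finset.mem_insert_self _ _
  · -- impossible: increasing on the tail
    exfalso
    have hge1 : ¬ ((⟨i - 1, hin1⟩ : Fin n) : ℕ) < m := by simp; omega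
    have hge2 : ¬ ((⟨i, hin⟩ : Fin n) : ℕ) < m := by simp; omega
    have := blockPerm_lt_first (hS := hS) (hm := hm) (v := v) hge1 hge2
      (Fin.lt_iff_val_lt_val.mpr (by simp; omega))
    have := Fin.lt_iff_val_lt_val.mp this
    omega

lemma descSet_blockPerm_iff (hS : S.card = m) (hm : m ≤ n) (I : Finset ℕ)
    (hmI : m ∈ I) (hm1 : 1 ≤ m) (hmax : ∀ x ∈ I, x ≤ m) :
    descSet (blockPerm m S v) ⊆ I ↔ descSet v ⊆ I.erase m := by
  constructor
  · intro h i hi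
    have hiv := hi
    rw [mem_descSet_iff] at hiv
    have : i ∈ descSet (blockPerm m S v) := descSet_subset_blockPerm hS hm hi
    refine Finset.mem_erase.mpr ⟨by omega, h this⟩
  · intro h i hi
    have := descSet_blockPerm_subset (hS := hS) (hm := hm) hi
    rcases Finset.mem_insert.mp this with rfl | hiv
    · exact hmI
    · exact Finset.mem_of_mem_erase (h hiv)

end Desc

section Decomp

variable {n m : ℕ}

lemma filter_lt_eq_map (hm : m ≤ n) :
    (Finset.univ.filter fun j : Fin n => (j : ℕ) < m)
      = Finset.map (Fin.castLEEmb hm) Finset.univ := by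
  ext j
  simp only [Finset.mem_filter, Finset.mem_univ, true_and, Finset.mem_map]
  constructor
  · intro hj
    exact ⟨⟨j, hj⟩, by apply Fin.ext; simp⟩
  · rintro ⟨a, -, rfl⟩
    simpa using a.2

lemma exists_blockPerm_eq (hm : m ≤ n) (I : Finset ℕ) (hmax : ∀ x ∈ I, x ≤ m)
    (w : Equiv.Perm (Fin n)) (hw : descSet w ⊆ I) :
    ∃ (S : Finset (Fin n)) (v : Equiv.Perm (Fin m)),
      S.card = m ∧ blockPerm m S v = w := by
  set S : Finset (Fin n) := (Finset.univ.filter fun j : Fin n => (j : ℕ) < m).image w with hSdef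
  have hS : S.card = m := by
    rw [hSdef, Finset.card_image_of_injective _ w.injective, filter_lt_eq_map hm,
      Finset.card_map, Finset.card_univ, Fintype.card_fin]
  have hmemS : ∀ j : Fin n, w j ∈ S ↔ (j : ℕ) < m := by
    intro j
    rw [hSdef]
    simp only [Finset.mem_image, Finset.mem_filter, Finset.mem_univ, true_and]
    constructor
    · rintro ⟨a, ha, he⟩
      rwa [← w.injective he]
    · intro hj
      exact ⟨j, hj, rfl⟩
  -- the inner permutation
  have hg : Function.Injective (fun a : Fin m =>
      (S.orderIsoOfFin hS).symm ⟨w (Fin.castLE hm a), (hmemS _).mpr a.2⟩) := by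
    intro a b hab
    have := congrArg (S.orderIsoOfFin hS) hab
    simp only [OrderIso.apply_symm_apply] at this
    have := congrArg (fun x => ((x : {x // x ∈ S}) : Fin n)) this
    simp only at this
    have h5 := w.injective this
    exact Fin.ext (by simpa using congrArg Fin.val h5)
  set v : Equiv.Perm (Fin m) :=
    Equiv.ofBijective _ (Finite.injective_iff_bijective.mp hg) with hvdef
  refine ⟨S, v, hS, ?_⟩
  -- increasing on the tail
  have hstep : ∀ t : ℕ, m ≤ t → t + 1 < n →
      ∀ (h1 : t < n) (h2 : t + 1 < n), w ⟨t, h1⟩ < w ⟨t + 1, h2⟩ := by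
    intro t hmt ht h1 h2
    have hnd : (t + 1) ∉ descSet w := by
      intro hd
      have := hmax _ (hw hd)
      omega
    rw [mem_descSet_iff] at hnd
    push_neg at hnd
    have hle := hnd (by omega) (by omega)
    rw [permVal_of_lt _ h2, permVal_of_lt _ (show t + 1 - 1 < n by omega)] at hle
    have e : (⟨t + 1 - 1, show t + 1 - 1 < n by omega⟩ : Fin n) = ⟨t, h1⟩ := Fin.ext (by simp)
    rw [e] at hle
    have hne : w ⟨t, h1⟩ ≠ w ⟨t + 1, h2⟩ := fun he => by
      have := congrArg Fin.val (w.injective he); simp at this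
    refine Fin.lt_iff_val_lt_val.mpr (lt_of_le_of_ne hle ?_)
    intro he
    exact hne (Fin.ext he)
  have hmono : ∀ a b : ℕ, m ≤ a → ∀ (hab : a < b) (hb : b < n),
      w ⟨a, lt_trans hab hb⟩ < w ⟨b, hb⟩ := by
    intro a b hma hab
    induction b, hab using Nat.le_induction with
    | base => intro hb; exact hstep a hma hb (by omega) hb
    | succ b hab ih =>
        intro hb
        exact lt_trans (ih (by omega)) (hstep b (by omega) hb (by omega) hb)
  -- the tail function is the increasing enumeration of Sᶜ
  have htail : ∀ (j : Fin n), ¬ (j : ℕ) < m → ∀ (hlt : (j : ℕ) - m < n - m),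
      w j = Sᶜ.orderEmbOfFin (card_compl_fin hS) ⟨(j : ℕ) - m, hlt⟩ := by
    have hmn : m ≤ n := hm
    set f : Fin (n - m) → Fin n := fun k => w ⟨m + k, by have := k.2; omega⟩ with hfdef
    have hfmem : ∀ k, f k ∈ Sᶜ := by
      intro k
      rw [Finset.mem_compl, hfdef]
      simp only
      rw [hmemS]
      simp
    have hfmono : StrictMono f := by
      intro a b hab
      exact hmono (m + a) (m + b) (by omega)
        (by have := Fin.lt_iff_val_lt_val.mp hab; omega) (by have := b.2; omega)
    have := Finset.orderEmbOfFin_unique (card_compl_fin hS) hfmem hfmono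
    intro j hj hlt
    have := congrFun this ⟨(j : ℕ) - m, hlt⟩
    rw [hfdef] at this
    simp only at this
    have hjm : m ≤ (j : ℕ) := not_lt.mp hj
    have e : (⟨m + ((j : ℕ) - m), by omega⟩ : Fin n) = j := Fin.ext (by simp; omega)
    rw [e] at this
    exact this
  -- conclude
  apply Equiv.ext
  intro j
  by_cases hj : (j : ℕ) < m
  · rw [blockPerm_apply_lt hS hm hj]
    have hv : v ⟨(j : ℕ), hj⟩ = (S.orderIsoOfFin hS).symm
        ⟨w (Fin.castLE hm ⟨(j : ℕ), hj⟩), (hmemS _).mpr hj⟩ := rfl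
    rw [hv]
    have : S.orderEmbOfFin hS ((S.orderIsoOfFin hS).symm
        ⟨w (Fin.castLE hm ⟨(j : ℕ), hj⟩), (hmemS _).mpr hj⟩)
        = w (Fin.castLE hm ⟨(j : ℕ), hj⟩) := by
      have hco : ∀ x : Fin m, S.orderEmbOfFin hS x = ((S.orderIsoOfFin hS x : {x // x ∈ S}) : Fin n) :=
        fun x => (Finset.coe_orderIsoOfFin_apply S hS x).symm
      rw [hco, OrderIso.apply_symm_apply]
    rw [this]
    congr 1
  · rw [blockPerm_apply_ge hS hm hj]
    exact (htail j hj (by have := j.2; omega)).symm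

end Decomp

lemma descSet_one {n : ℕ} : descSet (1 : Equiv.Perm (Fin n)) = ∅ := by
  rw [Finset.eq_empty_iff_forall_notMem]
  intro i hi
  rw [mem_descSet_iff] at hi
  obtain ⟨h1, h2, h3⟩ := hi
  have hv : ∀ t : ℕ, permVal (1 : Equiv.Perm (Fin n)) t = t := by
    intro t
    unfold permVal
    split <;> simp
  rw [hv, hv] at h3
  omega

lemma blockPerm_inj {n m : ℕ} {S S' : Finset (Fin n)} {v v' : Equiv.Perm (Fin m)}
    (hS : S.card = m) (hS' : S'.card = m) (hm : m ≤ n)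
    (h : blockPerm m S v = blockPerm m S' v') : S = S' ∧ v = v' := by
  have hSS : S = S' := by
    ext x
    set w := blockPerm m S v with hw
    have h1 := blockPerm_mem_iff hS hm (w.symm x) (v := v)
    have h2 := blockPerm_mem_iff hS' hm (w.symm x) (v := v')
    rw [← hw, Equiv.apply_symm_apply] at h1
    rw [← h, Equiv.apply_symm_apply] at h2
    rw [h1, ← h2]
  subst hSS
  refine ⟨rfl, ?_⟩
  apply Equiv.ext
  intro a
  have ha : ((Fin.castLE hm a : Fin n) : ℕ) < m := a.2
  have h1 := blockPerm_apply_lt hS hm (v := v) ha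
  have h2 := blockPerm_apply_lt hS' hm (v := v') ha
  have e : (⟨((Fin.castLE hm a : Fin n) : ℕ), ha⟩ : Fin m) = a := Fin.ext rfl
  rw [e] at h1 h2
  rw [h, h2] at h1
  exact (S.orderEmbOfFin hS).injective h1.symm

lemma sum_step (q n m : ℕ) (hm : m ≤ n) (I : Finset ℕ) (hmI : m ∈ I) (hm1 : 1 ≤ m)
    (hmax : ∀ x ∈ I, x ≤ m) :
    (∑ w ∈ Finset.univ.filter fun w : Equiv.Perm (Fin n) => descSet w ⊆ I,
        (q : ℤ) ^ invNum w)
      = (∑ S ∈ Finset.powersetCard m (Finset.univ : Finset (Fin n)), (q : ℤ) ^ crossNum S)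
        * (∑ v ∈ Finset.univ.filter fun v : Equiv.Perm (Fin m) => descSet v ⊆ I.erase m,
            (q : ℤ) ^ invNum v) := by
  rw [Finset.sum_mul_sum]
  have hstep : ∀ p : Finset (Fin n) × Equiv.Perm (Fin m),
      p ∈ (Finset.powersetCard m (Finset.univ : Finset (Fin n))) ×ˢ
        (Finset.univ.filter fun v : Equiv.Perm (Fin m) => descSet v ⊆ I.erase m) →
      p.1.card = m := by
    intro p hp
    rw [Finset.mem_product, Finset.mem_powersetCard] at hp
    exact hp.1.2
  rw [← Finset.sum_product']
  symm
  apply Finset.sum_bij (fun p hp => blockPerm m p.1 p.2)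
  · intro p hp
    have hS := hstep p hp
    rw [Finset.mem_product, Finset.mem_filter] at hp
    rw [Finset.mem_filter]
    exact ⟨Finset.mem_univ _,
      (descSet_blockPerm_iff hS hm I hmI hm1 hmax).mpr hp.2.2⟩
  · intro p hp p' hp' he
    obtain ⟨h1, h2⟩ := blockPerm_inj (hstep p hp) (hstep p' hp') hm he
    exact Prod.ext h1 h2
  · intro w hwt
    rw [Finset.mem_filter] at hwt
    obtain ⟨S, v, hS, hbw⟩ := exists_blockPerm_eq hm I hmax w hwt.2
    have hv : descSet v ⊆ I.erase m := by
      rw [← descSet_blockPerm_iff hS hm I hmI hm1 hmax, hbw]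
      exact hwt.2
    refine ⟨(S, v), ?_, hbw⟩
    rw [Finset.mem_product, Finset.mem_powersetCard, Finset.mem_filter]
    exact ⟨⟨Finset.subset_univ _, hS⟩, Finset.mem_univ _, hv⟩
  · intro p hp
    rw [invNum_blockPerm (hstep p hp) hm, ← pow_add, add_comm]

theorem main_aux (q : ℕ) : ∀ n : ℕ, 1 ≤ n → ∀ I : Finset ℕ, I ⊆ Finset.Icc 1 (n - 1) →
    (∑ w ∈ Finset.univ.filter fun w : Equiv.Perm (Fin n) => descSet w ⊆ I,
        (q : ℤ) ^ invNum w) * gaussDen q n I = qFactProd q n := by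
  intro n
  induction n using Nat.strong_induction_on with
  | _ n ih =>
    intro hn I hI
    rcases I.eq_empty_or_nonempty with rfl | hne
    · have hfilter : (Finset.univ.filter fun w : Equiv.Perm (Fin n) => descSet w ⊆ ∅) = {1} := by
        ext w
        simp only [Finset.mem_filter, Finset.mem_univ, true_and, Finset.mem_singleton]
        constructor
        · exact descSet_empty_eq_one
        · rintro rfl
          rw [descSet_one]
      rw [hfilter, Finset.sum_singleton, invNum_one, pow_zero, gaussDen_empty, one_mul]
    · set m := I.max' hne with hmdef
      have hmI : m ∈ I := I.max'_mem hne
      have hmax : ∀ x ∈ I, x ≤ m := fun x hx => I.le_max' x hx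
      have hmIcc := Finset.mem_Icc.mp (hI hmI)
      have hm1 : 1 ≤ m := hmIcc.1
      have hmn : m < n := by omega
      have hI' : I.erase m ⊆ Finset.Icc 1 (m - 1) := by
        intro x hx
        have hx1 := Finset.mem_of_mem_erase hx
        have hx2 := Finset.ne_of_mem_erase hx
        have := Finset.mem_Icc.mp (hI hx1)
        have := hmax x hx1
        rw [Finset.mem_Icc]
        omega
      have h1 := ih m hmn hm1 (I.erase m) hI'
      have h2 := gSum_key q n m (le_of_lt hmn)
      rw [sum_step q n m (le_of_lt hmn) I hmI hm1 hmax,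
        gaussDen_step q n m I hmI hmn hmax, sum_crossNum_eq_gSum]
      linear_combination (gSum q n m * qFactProd q (n - m)) * h1 + h2

/-- `∑_{w ∈ S_n, Des(w) ⊆ I} q^{inv(w)} · ∏_{k=1}^{l+1} ∏_{j=1}^{i_k - i_{k-1}} (q^j - 1)
  = ∏_{j=1}^{n} (q^j - 1)`, i.e. the descent-restricted length generating function equals the
Gaussian multinomial coefficient `binom(n, I)_q`. -/
theorem descent_length_sum_eq_gaussian_multinomial
    (n : ℕ) (hn : 1 ≤ n) (I : Finset ℕ) (hI : I ⊆ Finset.Icc 1 (n - 1)) (q : ℕ) :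
    (∑ w ∈ Finset.univ.filter fun w : Equiv.Perm (Fin n) => descSet w ⊆ I,
        (q : ℤ) ^ invNum w) * gaussDen q n I = qFactProd q n := by
  exact main_aux q n hn I hI
end

section
/- Let A be a commutative ring, let n ≥ 1, let S := {1,…,n−1}, and let W, W' : 𝒫(S) → A be two families indexed by the subsets of S satisfying the inversion property: for every I ⊆ S, W'(I) = (−1)^{|I|} · ∑_{J ⊆ I} W(J). Then for every I ⊆ S, ∑_{J : I ⊆ J ⊆ S} W'(J) = (−1)^{n−1} · ∑_{J : S∖I ⊆ J ⊆ S} W(J). -/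
open Finset

lemma my_sum_powerset_neg_one (A : Type*) [CommRing A] (x : Finset ℕ) :
    (∑ m ∈ x.powerset, (-1 : A) ^ m.card) = if x = ∅ then 1 else 0 := by
  have h := Finset.sum_powerset_neg_one_pow_card (x := x)
  have := congrArg (Int.cast : ℤ → A) h
  push_cast at this
  simpa using this

lemma alt_sum_supersets (A : Type*) [CommRing A] (S T : Finset ℕ) (hT : T ⊆ S) :
    ∑ J ∈ S.powerset.filter (fun J => T ⊆ J), (-1 : A) ^ J.card =
      if T = S then (-1 : A) ^ S.card else 0 := by
  classical
  have key : ∑ J ∈ S.powerset.filter (fun J => T ⊆ J), (-1 : A) ^ J.card =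
      ∑ K ∈ (S \ T).powerset, (-1 : A) ^ (K ∪ T).card := by
    refine Finset.sum_nbij' (fun J => J \ T) (fun K => K ∪ T) ?_ ?_ ?_ ?_ ?_
    · intro J hJ
      simp only [mem_filter, mem_powerset] at hJ ⊢
      exact sdiff_subset_sdiff hJ.1 le_rfl
    · intro K hK
      simp only [mem_powerset, mem_filter] at hK ⊢
      exact ⟨union_subset (hK.trans sdiff_subset) hT, subset_union_right⟩
    · intro J hJ
      simp only [mem_filter, mem_powerset] at hJ
      exact sdiff_union_of_subset hJ.2
    · intro K hK
      simp only [mem_powerset] at hK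
      exact union_sdiff_cancel_right (sdiff_disjoint.mono_left hK)
    · intro J hJ
      simp only [mem_filter, mem_powerset] at hJ
      rw [sdiff_union_of_subset hJ.2]
  rw [key]
  have hcard : ∀ K ∈ (S \ T).powerset, (K ∪ T).card = K.card + T.card := by
    intro K hK
    simp only [mem_powerset] at hK
    exact card_union_of_disjoint (sdiff_disjoint.mono_left hK)
  calc ∑ K ∈ (S \ T).powerset, (-1 : A) ^ (K ∪ T).card
      = ∑ K ∈ (S \ T).powerset, (-1 : A) ^ K.card * (-1 : A) ^ T.card := by
        refine Finset.sum_congr rfl fun K hK => ?_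
        rw [hcard K hK, pow_add]
    _ = (∑ K ∈ (S \ T).powerset, (-1 : A) ^ K.card) * (-1 : A) ^ T.card := by
        rw [Finset.sum_mul]
    _ = (if S \ T = ∅ then 1 else 0) * (-1 : A) ^ T.card := by
        rw [my_sum_powerset_neg_one]
    _ = if T = S then (-1 : A) ^ S.card else 0 := by
        have hiff : S \ T = ∅ ↔ T = S := by
          rw [Finset.sdiff_eq_empty_iff_subset]
          exact ⟨fun h => subset_antisymm hT h, fun h => h ▸ le_rfl⟩
        by_cases h : T = S
        · rw [if_pos (hiff.mpr h), one_mul, if_pos h, h]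
        · rw [if_neg (fun hc => h (hiff.mp hc)), zero_mul, if_neg h]

/-- Lemma 7 of [VollBLMS/06]: if the families `W, W' : 𝒫({1,…,n-1}) → A` satisfy the
inversion property `W'(I) = (-1)^{|I|} ∑_{J ⊆ I} W(J)` for all `I ⊆ S = {1,…,n-1}`, then for
every `I ⊆ S` one has `∑_{I ⊆ J ⊆ S} W'(J) = (-1)^{n-1} ∑_{S∖I ⊆ J ⊆ S} W(J)`. -/
theorem inversion_property_sum_over_supersets
    (A : Type*) [CommRing A] (n : ℕ) (hn : 1 ≤ n)
    (W W' : Finset ℕ → A)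
    (hWW' : ∀ I ⊆ Finset.Icc 1 (n - 1),
      W' I = (-1 : A) ^ I.card * ∑ J ∈ I.powerset, W J) :
    ∀ I ⊆ Finset.Icc 1 (n - 1),
      ∑ J ∈ (Finset.Icc 1 (n - 1)).powerset.filter (fun J => I ⊆ J), W' J =
        (-1 : A) ^ (n - 1) *
          ∑ J ∈ (Finset.Icc 1 (n - 1)).powerset.filter
            (fun J => Finset.Icc 1 (n - 1) \ I ⊆ J), W J := by
  classical
  intro I hI
  set S := Finset.Icc 1 (n - 1) with hS
  have hScard : S.card = n - 1 := by
    rw [hS, Nat.card_Icc]; omega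
  -- Step 1: substitute W' and expand
  have step1 : ∑ J ∈ S.powerset.filter (fun J => I ⊆ J), W' J =
      ∑ J ∈ S.powerset, ∑ K ∈ S.powerset,
        if I ⊆ J ∧ K ⊆ J then (-1 : A) ^ J.card * W K else 0 := by
    rw [Finset.sum_filter]
    refine Finset.sum_congr rfl fun J hJ => ?_
    simp only [mem_powerset] at hJ
    by_cases h : I ⊆ J
    · simp only [h, if_true, true_and]
      rw [hWW' J hJ, mul_sum]
      have hpow : J.powerset = S.powerset.filter (fun K => K ⊆ J) := by
        ext K
        simp only [mem_powerset, mem_filter]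
        exact ⟨fun hK => ⟨hK.trans hJ, hK⟩, fun hK => hK.2⟩
      rw [hpow, Finset.sum_filter]
    · simp [h]
  rw [step1, Finset.sum_comm]
  -- Step 2: compute inner sums
  have step2 : ∀ K ∈ S.powerset,
      (∑ J ∈ S.powerset, if I ⊆ J ∧ K ⊆ J then (-1 : A) ^ J.card * W K else 0) =
      (if I ∪ K = S then (-1 : A) ^ S.card else 0) * W K := by
    intro K hK
    simp only [mem_powerset] at hK
    have : (∑ J ∈ S.powerset, if I ⊆ J ∧ K ⊆ J then (-1 : A) ^ J.card * W K else 0) =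
        (∑ J ∈ S.powerset.filter (fun J => I ∪ K ⊆ J), (-1 : A) ^ J.card) * W K := by
      rw [Finset.sum_filter, Finset.sum_mul]
      refine Finset.sum_congr rfl fun J _ => ?_
      by_cases h : I ∪ K ⊆ J
      · rw [if_pos ⟨(subset_union_left).trans h, (subset_union_right).trans h⟩, if_pos h]
      · rw [if_neg, if_neg h, zero_mul]
        intro ⟨h1, h2⟩; exact h (union_subset h1 h2)
    rw [this, alt_sum_supersets A S (I ∪ K) (union_subset hI hK)]
  rw [Finset.sum_congr rfl step2]
  -- Step 3: the condition I ∪ K = S is equivalent to S \ I ⊆ K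
  rw [Finset.mul_sum, Finset.sum_filter]
  refine Finset.sum_congr rfl fun K hK => ?_
  simp only [mem_powerset] at hK
  have hiff : I ∪ K = S ↔ S \ I ⊆ K := by
    constructor
    · intro h
      intro x hx
      simp only [mem_sdiff] at hx
      have : x ∈ I ∪ K := h ▸ hx.1
      rcases mem_union.mp this with h1 | h2
      · exact absurd h1 hx.2
      · exact h2
    · intro h
      apply subset_antisymm (union_subset hI hK)
      intro x hx
      by_cases hxI : x ∈ I
      · exact mem_union_left _ hxI
      · exact mem_union_right _ (h (mem_sdiff.mpr ⟨hx, hxI⟩))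
  by_cases h : S \ I ⊆ K
  · rw [if_pos h, if_pos (hiff.mpr h), hScard]
  · rw [if_neg h, if_neg (fun hc => h (hiff.mp hc)), zero_mul]
end

section
/- Let A be a commutative ring, let q be an invertible element of A, let n ≥ 1, and let S := {1,…,n−1}. For a subset I ⊆ S and an element x ∈ A, define B_I(x) := ∑_{w ∈ S_n, Des(w) ⊆ I} x^{inv(w)}. Suppose W, W' : 𝒫(S) → A satisfy, for every I ⊆ S, W'(I) = (−1)^{|I|} · ∑_{J ⊆ I} W(J). Then ∑_{I ⊆ S} B_I(q) · W'(I) = (−1)^{n−1} · q^{n(n−1)/2} · ∑_{I ⊆ S} B_I(q^{−1}) · W(I). -/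
open Finset

/-- `B_I(x) = ∑_{w ∈ S_n, Des(w) ⊆ I} x^{inv(w)}`, the descent-restricted length
generating function (which evaluates to the Gaussian multinomial `binom(n,I)_x`). -/
def BPoly {A : Type*} [CommRing A] (n : ℕ) (I : Finset ℕ) (x : A) : A :=
  ∑ w ∈ Finset.univ.filter fun w : Equiv.Perm (Fin n) => descSet w ⊆ I, x ^ invNum w

lemma descSet_subset {n : ℕ} (w : Equiv.Perm (Fin n)) :
    descSet w ⊆ Finset.Icc 1 (n - 1) := Finset.filter_subset _ _

/-- sign sum over supersets -/
lemma signSum {A : Type*} [CommRing A] (S K : Finset ℕ) (hK : K ⊆ S) :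
    ∑ I ∈ S.powerset.filter (fun I => K ⊆ I), (-1 : A) ^ I.card
      = if K = S then (-1 : A) ^ S.card else 0 := by
  have hbij : ∑ T ∈ (S \ K).powerset, (-1 : A) ^ (K ∪ T).card
      = ∑ I ∈ S.powerset.filter (fun I => K ⊆ I), (-1 : A) ^ I.card := by
    refine Finset.sum_nbij' (fun T => K ∪ T) (fun I => I \ K) ?_ ?_ ?_ ?_ ?_
    · intro T hT
      simp only [mem_filter, mem_powerset] at hT ⊢
      exact ⟨union_subset hK (hT.trans sdiff_subset), subset_union_left⟩
    · intro I hI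
      simp only [mem_filter, mem_powerset] at hI ⊢
      exact sdiff_subset_sdiff hI.1 Subset.rfl
    · intro T hT
      simp only [mem_powerset] at hT
      exact Finset.union_sdiff_cancel_left (Finset.disjoint_sdiff.mono_right hT)
    · intro I hI
      simp only [mem_filter, mem_powerset] at hI
      exact Finset.union_sdiff_of_subset hI.2
    · intro T hT; rfl
  rw [← hbij]
  have hcard : ∀ T ∈ (S \ K).powerset, (K ∪ T).card = K.card + T.card := by
    intro T hT
    simp only [mem_powerset] at hT
    exact Finset.card_union_of_disjoint (Finset.disjoint_sdiff.mono_right hT)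
  rw [Finset.sum_congr rfl (fun T hT => by rw [hcard T hT, pow_add]), ← Finset.mul_sum]
  have hz : ∑ T ∈ (S \ K).powerset, (-1 : A) ^ T.card
      = if S \ K = ∅ then 1 else 0 := by
    have h := @Finset.sum_powerset_neg_one_pow_card ℕ _ (S \ K)
    have h2 := congrArg (fun z : ℤ => (z : A)) h
    push_cast at h2
    rw [h2]
  rw [hz]
  have hiff : S \ K = ∅ ↔ K = S := by
    constructor
    · intro h
      exact Finset.Subset.antisymm hK (by rwa [← Finset.sdiff_eq_empty_iff_subset])
    · intro h; rw [h]; simp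
  by_cases h : K = S
  · rw [if_pos (hiff.mpr h), if_pos h, h, mul_one]
  · rw [if_neg (fun he => h (hiff.mp he)), if_neg h, mul_zero]

lemma card_lt_pairs (n : ℕ) :
    (Finset.univ.filter fun q : Fin n × Fin n => q.1 < q.2).card = n * (n - 1) / 2 := by
  rw [Finset.card_eq_sum_card_fiberwise
    (f := fun q : Fin n × Fin n => q.2) (t := Finset.univ) (fun q _ => mem_univ q.2)]
  have fib : ∀ b : Fin n,
      ((Finset.univ.filter fun q : Fin n × Fin n => q.1 < q.2).filter
        fun q => q.2 = b).card = (b : ℕ) := by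
    intro b
    rw [← Fin.card_Iio (b := b)]
    refine Finset.card_nbij' (fun q => q.1) (fun a => (a, b)) ?_ ?_ ?_ ?_
    · intro q hq
      simp only [Finset.mem_coe, mem_filter, mem_univ, true_and, Finset.mem_Iio] at hq ⊢
      exact hq.2 ▸ hq.1
    · intro a ha
      simp only [Finset.mem_coe, mem_filter, mem_univ, true_and, Finset.mem_Iio] at ha ⊢
      exact ⟨ha, trivial⟩
    · intro q hq
      simp only [Finset.mem_coe, mem_filter] at hq
      exact Prod.ext rfl hq.2.symm
    · intro a ha; rfl
  simp only [fib]
  rw [Fin.sum_univ_eq_sum_range (fun i => i) n]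
  exact Finset.sum_range_id n

lemma revPerm_mul_revPerm {n : ℕ} : (Fin.revPerm : Equiv.Perm (Fin n)) * Fin.revPerm = 1 := by
  apply Equiv.ext
  intro x
  exact Fin.rev_rev x

lemma invNum_rev_add {n : ℕ} (w : Equiv.Perm (Fin n)) :
    invNum (Fin.revPerm * w) + invNum w = n * (n - 1) / 2 := by
  rw [← card_lt_pairs n]
  unfold invNum
  rw [← Finset.card_union_of_disjoint]
  · congr 1
    ext q
    simp only [mem_union, mem_filter, mem_univ, true_and, Equiv.Perm.mul_apply,
      Fin.revPerm_apply, Fin.rev_lt_rev]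
    constructor
    · rintro (⟨h, _⟩ | ⟨h, _⟩) <;> exact h
    · intro h
      have hne : w q.1 ≠ w q.2 := fun he => absurd (w.injective he) (ne_of_lt h)
      rcases lt_or_gt_of_ne hne with h2 | h2
      · exact Or.inl ⟨h, h2⟩
      · exact Or.inr ⟨h, h2⟩
  · rw [Finset.disjoint_filter]
    rintro q _ ⟨_, h1⟩ ⟨_, h2⟩
    simp only [Equiv.Perm.mul_apply, Fin.revPerm_apply, Fin.rev_lt_rev] at h1
    exact absurd h2 (not_lt.mpr h1.le)

lemma descSet_rev {n : ℕ} (w : Equiv.Perm (Fin n)) :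
    descSet (Fin.revPerm * w) = Finset.Icc 1 (n - 1) \ descSet w := by
  unfold descSet
  rw [← Finset.filter_not]
  apply Finset.filter_congr
  intro i hi
  rw [Finset.mem_Icc] at hi
  have h1 : i < n := by omega
  have h2 : i - 1 < n := by omega
  have hIcc : 1 ≤ i := hi.1
  simp only [permVal, dif_pos h1, dif_pos h2, Equiv.Perm.mul_apply, Fin.revPerm_apply]
  have hne : (w ⟨i - 1, h2⟩ : ℕ) ≠ (w ⟨i, h1⟩ : ℕ) := by
    intro he
    have := w.injective (Fin.val_injective he)
    have : i - 1 = i := congrArg Fin.val this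
    omega
  have hrev : ((w ⟨i, h1⟩).rev : ℕ) < ((w ⟨i - 1, h2⟩).rev : ℕ)
      ↔ (w ⟨i - 1, h2⟩ : ℕ) < (w ⟨i, h1⟩ : ℕ) := by
    rw [← Fin.lt_def, ← Fin.lt_def, Fin.rev_lt_rev]
  rw [hrev]
  omega

lemma pow_sub_units {A : Type*} [CommRing A] (u : Aˣ) {N k : ℕ} (hk : k ≤ N) :
    ((u : A)) ^ (N - k) = (u : A) ^ N * ((u⁻¹ : Aˣ) : A) ^ k := by
  have h1 : ((u : A) * ((u⁻¹ : Aˣ) : A)) = 1 := by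
    rw [← Units.val_mul, mul_inv_cancel, Units.val_one]
  calc (u : A) ^ (N - k) = (u : A) ^ (N - k) * ((u : A) * ((u⁻¹ : Aˣ) : A)) ^ k := by
        rw [h1, one_pow, mul_one]
    _ = ((u : A) ^ (N - k) * (u : A) ^ k) * ((u⁻¹ : Aˣ) : A) ^ k := by
        rw [mul_pow]; ring
    _ = (u : A) ^ N * ((u⁻¹ : Aˣ) : A) ^ k := by
        rw [← pow_add, Nat.sub_add_cancel hk]

lemma keyJ {A : Type*} [CommRing A] (n : ℕ) (hn : 1 ≤ n) (u : Aˣ)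
    (J : Finset ℕ) (hJ : J ⊆ Finset.Icc 1 (n - 1)) :
    ∑ I ∈ (Finset.Icc 1 (n - 1)).powerset.filter (fun I => J ⊆ I),
        (-1 : A) ^ I.card * BPoly n I (u : A)
      = (-1 : A) ^ (n - 1) * (u : A) ^ (n * (n - 1) / 2) * BPoly n J ((u⁻¹ : Aˣ) : A) := by
  set S := Finset.Icc 1 (n - 1) with hS
  set N := n * (n - 1) / 2 with hN
  have hcardS : S.card = n - 1 := by rw [hS, Nat.card_Icc]; omega
  -- step 1: expand and swap
  have step1 : ∑ I ∈ S.powerset.filter (fun I => J ⊆ I), (-1 : A) ^ I.card * BPoly n I (u : A)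
      = ∑ w ∈ (Finset.univ : Finset (Equiv.Perm (Fin n))),
          ∑ I ∈ S.powerset.filter (fun I => J ∪ descSet w ⊆ I), (-1 : A) ^ I.card * (u : A) ^ invNum w := by
    simp only [BPoly, Finset.mul_sum]
    rw [Finset.sum_comm' (s := S.powerset.filter (fun I => J ⊆ I))
      (t := fun I => Finset.univ.filter fun w : Equiv.Perm (Fin n) => descSet w ⊆ I)
      (t' := Finset.univ)
      (s' := fun w => S.powerset.filter (fun I => J ∪ descSet w ⊆ I))]
    intro I w
    simp only [mem_filter, mem_powerset, mem_univ, true_and, Finset.union_subset_iff]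
    tauto
  rw [step1]
  -- step 2: evaluate inner sign sum
  have step2 : ∀ w : Equiv.Perm (Fin n),
      ∑ I ∈ S.powerset.filter (fun I => J ∪ descSet w ⊆ I), (-1 : A) ^ I.card * (u : A) ^ invNum w
      = (if J ∪ descSet w = S then (-1 : A) ^ S.card else 0) * (u : A) ^ invNum w := by
    intro w
    rw [← Finset.sum_mul, signSum S (J ∪ descSet w) (union_subset hJ (descSet_subset w))]
  rw [Finset.sum_congr rfl (fun w _ => step2 w)]
  -- step 3: condition rewrite
  have hc : ∀ w : Equiv.Perm (Fin n),
      (J ∪ descSet w = S) ↔ descSet (Fin.revPerm * w) ⊆ J := by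
    intro w
    rw [descSet_rev]
    constructor
    · intro h x hx
      rw [mem_sdiff] at hx
      have hxS : x ∈ J ∪ descSet w := by rw [h]; exact hx.1
      rcases Finset.mem_union.mp hxS with h' | h'
      · exact h'
      · exact absurd h' hx.2
    · intro h
      apply Finset.Subset.antisymm (union_subset hJ (descSet_subset w))
      intro x hxS
      by_cases hx : x ∈ descSet w
      · exact Finset.mem_union_right _ hx
      · exact Finset.mem_union_left _ (h (mem_sdiff.mpr ⟨hxS, hx⟩))
  have step3 : ∑ w : Equiv.Perm (Fin n),
      (if J ∪ descSet w = S then (-1 : A) ^ S.card else 0) * (u : A) ^ invNum w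
      = ∑ w ∈ Finset.univ.filter (fun w : Equiv.Perm (Fin n) => descSet (Fin.revPerm * w) ⊆ J),
          (-1 : A) ^ S.card * (u : A) ^ invNum w := by
    rw [Finset.sum_filter]
    apply Finset.sum_congr rfl
    intro w _
    by_cases hw : descSet (Fin.revPerm * w) ⊆ J
    · rw [if_pos hw, if_pos ((hc w).mpr hw)]
    · rw [if_neg hw, if_neg (fun h => hw ((hc w).mp h)), zero_mul]
  rw [step3]
  -- step 4: reindex by w ↦ revPerm * w
  have step4 : ∑ w ∈ Finset.univ.filter (fun w : Equiv.Perm (Fin n) => descSet (Fin.revPerm * w) ⊆ J),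
        (-1 : A) ^ S.card * (u : A) ^ invNum w
      = ∑ v ∈ Finset.univ.filter (fun v : Equiv.Perm (Fin n) => descSet v ⊆ J),
          (-1 : A) ^ S.card * ((u : A) ^ N * ((u⁻¹ : Aˣ) : A) ^ invNum v) := by
    refine Finset.sum_nbij' (fun w => Fin.revPerm * w) (fun v => Fin.revPerm * v) ?_ ?_ ?_ ?_ ?_
    · intro w hw
      simp only [mem_filter, mem_univ, true_and] at hw ⊢
      exact hw
    · intro v hv
      simp only [mem_filter, mem_univ, true_and] at hv ⊢
      rwa [← mul_assoc, revPerm_mul_revPerm, one_mul]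
    · intro w _
      show Fin.revPerm * (Fin.revPerm * w) = w
      rw [← mul_assoc, revPerm_mul_revPerm, one_mul]
    · intro v _
      show Fin.revPerm * (Fin.revPerm * v) = v
      rw [← mul_assoc, revPerm_mul_revPerm, one_mul]
    · intro w _
      congr 1
      have hadd := invNum_rev_add w
      have hle : invNum (Fin.revPerm * w) ≤ N := by omega
      have : invNum w = N - invNum (Fin.revPerm * w) := by omega
      rw [this, pow_sub_units u hle]
  rw [step4, BPoly, Finset.mul_sum, hcardS]
  exact Finset.sum_congr rfl (fun v _ => by ring)

/-- The abstract local functional equation: if the family `(W_I)` satisfies the inversion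
property under `p → p⁻¹`, then
`∑_I B_I(q) W'(I) = (-1)^{n-1} q^{n(n-1)/2} ∑_I B_I(q⁻¹) W(I)` for any invertible `q`. -/
theorem functional_equation_of_inversion_property
    (A : Type*) [CommRing A] (n : ℕ) (hn : 1 ≤ n) (u : Aˣ)
    (W W' : Finset ℕ → A)
    (hWW' : ∀ I ⊆ Finset.Icc 1 (n - 1),
      W' I = (-1 : A) ^ I.card * ∑ J ∈ I.powerset, W J) :
    ∑ I ∈ (Finset.Icc 1 (n - 1)).powerset, BPoly n I (u : A) * W' I =
      (-1 : A) ^ (n - 1) * (u : A) ^ (n * (n - 1) / 2) *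
        ∑ I ∈ (Finset.Icc 1 (n - 1)).powerset, BPoly n I ((u⁻¹ : Aˣ) : A) * W I := by
  set S := Finset.Icc 1 (n - 1) with hS
  have h1 : ∑ I ∈ S.powerset, BPoly n I (u : A) * W' I
      = ∑ I ∈ S.powerset, ∑ J ∈ I.powerset, ((-1 : A) ^ I.card * BPoly n I (u : A)) * W J := by
    apply Finset.sum_congr rfl
    intro I hI
    rw [hWW' I (Finset.mem_powerset.mp hI), Finset.mul_sum, Finset.mul_sum]
    apply Finset.sum_congr rfl
    intro J _
    ring
  rw [h1]
  rw [Finset.sum_comm' (s := S.powerset) (t := fun I => I.powerset)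
    (t' := S.powerset) (s' := fun J => S.powerset.filter (fun I => J ⊆ I))
    (by intro I K; simp only [mem_powerset, mem_filter]; constructor
        · rintro ⟨h1, h2⟩; exact ⟨⟨h1, h2⟩, h2.trans h1⟩
        · rintro ⟨⟨h1, h2⟩, _⟩; exact ⟨h1, h2⟩)]
  rw [Finset.mul_sum]
  apply Finset.sum_congr rfl
  intro J hJ
  rw [← Finset.sum_mul, keyJ n hn u J (Finset.mem_powerset.mp hJ)]
  ring
end

section
/- Let p be a prime, n ≥ 1, and f ∈ ℤ[x_1,…,x_n]. Let μ be the Haar probability measure on ℤ_p^n, and for m ≥ 0 let N_m be the number of x ∈ (ℤ/p^mℤ)^n with f(x) = 0. Then for every real s > 0, the series ∑_{m=0}^{∞} N_m p^{−(n+s)m} converges and ∫_{ℤ_p^n} |f(x)|_p^{s} dμ(x) = p^{s} + (1 − p^{s}) · ∑_{m=0}^{∞} N_m p^{−(n+s)m}. (Equivalently, the Poincaré series P_f(p^{−s}) = ∑_m p^{−nm}N_m p^{−sm} satisfies P_f(p^{−s}) = (1 − p^{−s} Z_f(s))/(1 − p^{−s}), where Z_f(s) = ∫_{ℤ_p^n}|f(x)|_p^s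 dμ is Igusa's local zeta function.) -/
open MeasureTheory
open scoped ENNReal

/-- The number `N_m` of solutions of the congruence `f(x) ≡ 0 (mod p^m)` in `n` variables,
i.e. the cardinality of `{x ∈ (ℤ/p^mℤ)^n : f(x) = 0}`. -/
noncomputable def solCount (p n m : ℕ) (f : MvPolynomial (Fin n) ℤ) : ℕ :=
  Nat.card {x : Fin n → ZMod (p ^ m) // MvPolynomial.aeval x f = 0}

namespace IgusaAux

open MvPolynomial ENNReal

variable {p : ℕ} [hp : Fact p.Prime] {n : ℕ}

lemma continuous_aeval (f : MvPolynomial (Fin n) ℤ) :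
    Continuous fun x : Fin n → ℤ_[p] => aeval x f := by
  induction f using MvPolynomial.induction_on with
  | C a => simpa using continuous_const
  | add f g hf hg => simp only [map_add]; exact hf.add hg
  | mul_X f i hf => simp only [map_mul, aeval_X]; exact hf.mul (continuous_apply i)

lemma toZModPow_eq_iff (m : ℕ) (x g : ℤ_[p]) :
    PadicInt.toZModPow m x = PadicInt.toZModPow m g ↔ ‖x - g‖ ≤ (p : ℝ) ^ (-(m:ℤ)) := by
  rw [PadicInt.norm_le_pow_iff_mem_span_pow, ← PadicInt.ker_toZModPow, RingHom.mem_ker,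
    map_sub, sub_eq_zero]

lemma aeval_toZModPow (m : ℕ) (f : MvPolynomial (Fin n) ℤ) (x : Fin n → ℤ_[p]) :
    PadicInt.toZModPow m (aeval x f) = aeval (fun i => PadicInt.toZModPow m (x i)) f := by
  have := MvPolynomial.comp_aeval_apply (R := ℤ) (f := x)
    ((PadicInt.toZModPow m).toIntAlgHom) f
  simpa [RingHom.toIntAlgHom_coe] using this

/-- the level set `{x : ‖f(x)‖ ≤ p^{-m}}`. -/
def lev (f : MvPolynomial (Fin n) ℤ) (m : ℕ) : Set (Fin n → ℤ_[p]) :=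
  {x | ‖aeval x f‖ ≤ (p : ℝ) ^ (-(m:ℤ))}

/-- fiber of the reduction map mod `p^m` over `y`. -/
def fiber (m : ℕ) (y : Fin n → ZMod (p ^ m)) : Set (Fin n → ℤ_[p]) :=
  {x | ∀ i, PadicInt.toZModPow m (x i) = y i}

lemma mem_lev_iff (f : MvPolynomial (Fin n) ℤ) (m : ℕ) (x : Fin n → ℤ_[p]) :
    x ∈ lev f m ↔ aeval (fun i => PadicInt.toZModPow m (x i)) f = 0 := by
  rw [← aeval_toZModPow, lev, Set.mem_setOf_eq]
  have := PadicInt.norm_le_pow_iff_mem_span_pow (aeval x f) m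
  rw [this, ← PadicInt.ker_toZModPow, RingHom.mem_ker]

open Classical in
lemma lev_eq_biUnion (f : MvPolynomial (Fin n) ℤ) (m : ℕ) :
    lev f m = ⋃ y ∈ Finset.univ.filter
        (fun y : Fin n → ZMod (p ^ m) => aeval y f = 0), fiber m y := by
  haveI : NeZero (p ^ m) := ⟨pow_ne_zero m hp.out.ne_zero⟩
  ext x
  rw [mem_lev_iff]
  simp only [Set.mem_iUnion, Finset.mem_filter, Finset.mem_univ, true_and]
  constructor
  · intro h
    exact ⟨fun i => PadicInt.toZModPow m (x i), h, fun i => rfl⟩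
  · rintro ⟨y, hy, hx⟩
    have : (fun i => PadicInt.toZModPow m (x i)) = y := funext hx
    rw [this]; exact hy

open Classical in
lemma solCount_eq_card (m : ℕ) (f : MvPolynomial (Fin n) ℤ) :
    solCount p n m f = (Finset.univ.filter
        (fun y : Fin n → ZMod (p ^ m) => aeval y f = 0)).card := by
  haveI : NeZero (p ^ m) := ⟨pow_ne_zero m hp.out.ne_zero⟩
  rw [solCount, Nat.card_eq_fintype_card, Fintype.card_subtype]

variable [MeasurableSpace (Fin n → ℤ_[p])] [BorelSpace (Fin n → ℤ_[p])]

lemma fiber_eq (m : ℕ) (g : Fin n → ℤ_[p]) :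
    fiber m (fun i => PadicInt.toZModPow m (g i)) =
      {x : Fin n → ℤ_[p] | ∀ i, ‖x i - g i‖ ≤ (p : ℝ) ^ (-(m:ℤ))} := by
  ext x; exact forall_congr' fun i => toZModPow_eq_iff m (x i) (g i)

lemma measurableSet_normset (m : ℕ) (g : Fin n → ℤ_[p]) :
    MeasurableSet {x : Fin n → ℤ_[p] | ∀ i, ‖x i - g i‖ ≤ (p : ℝ) ^ (-(m:ℤ))} := by
  have : IsClosed {x : Fin n → ℤ_[p] | ∀ i, ‖x i - g i‖ ≤ (p : ℝ) ^ (-(m:ℤ))} := by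
    have : {x : Fin n → ℤ_[p] | ∀ i, ‖x i - g i‖ ≤ (p : ℝ) ^ (-(m:ℤ))} =
        ⋂ i, (fun x : Fin n → ℤ_[p] => ‖x i - g i‖) ⁻¹' Set.Iic ((p : ℝ) ^ (-(m:ℤ))) := by
      ext x; simp [Set.mem_iInter]
    rw [this]
    exact isClosed_iInter fun i =>
      IsClosed.preimage (((continuous_apply i).sub continuous_const).norm) isClosed_Iic
  exact this.measurableSet

noncomputable def lift' (m : ℕ) (y : Fin n → ZMod (p ^ m)) : Fin n → ℤ_[p] :=
  fun i => ((y i).val : ℤ_[p])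

omit [MeasurableSpace (Fin n → ℤ_[p])] [BorelSpace (Fin n → ℤ_[p])] in
lemma toZModPow_lift' (m : ℕ) (y : Fin n → ZMod (p ^ m)) (i : Fin n) :
    PadicInt.toZModPow m (lift' m y i) = y i := by
  haveI : NeZero (p ^ m) := ⟨pow_ne_zero m hp.out.ne_zero⟩
  simp only [lift', map_natCast]
  exact ZMod.natCast_rightInverse (y i)

omit [MeasurableSpace (Fin n → ℤ_[p])] [BorelSpace (Fin n → ℤ_[p])] in
lemma fiber_eq' (m : ℕ) (y : Fin n → ZMod (p ^ m)) :
    fiber m y = {x : Fin n → ℤ_[p] | ∀ i, ‖x i - lift' m y i‖ ≤ (p : ℝ) ^ (-(m:ℤ))} := by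
  have : y = fun i => PadicInt.toZModPow m (lift' m y i) := by
    funext i; rw [toZModPow_lift']
  conv_lhs => rw [this]
  ext x; exact forall_congr' fun i => toZModPow_eq_iff m (x i) (lift' m y i)

lemma measurableSet_fiber (m : ℕ) (y : Fin n → ZMod (p ^ m)) :
    MeasurableSet (fiber m y) := by
  rw [fiber_eq']; exact measurableSet_normset m _

lemma measurableSet_lev (f : MvPolynomial (Fin n) ℤ) (m : ℕ) :
    MeasurableSet (lev (p := p) f m) := by
  have h : IsClosed ((fun x : Fin n → ℤ_[p] => ‖aeval x f‖) ⁻¹'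
      Set.Iic ((p : ℝ) ^ (-(m:ℤ)))) :=
    IsClosed.preimage (continuous_aeval f).norm isClosed_Iic
  exact h.measurableSet

variable (μ : Measure (Fin n → ℤ_[p])) [IsProbabilityMeasure μ] [μ.IsAddLeftInvariant]

instance : MeasurableAdd (Fin n → ℤ_[p]) :=
  ⟨fun _ => (continuous_const.add continuous_id).measurable,
   fun _ => (continuous_id.add continuous_const).measurable⟩

omit [IsProbabilityMeasure μ] in
lemma measure_fiber (m : ℕ) (y : Fin n → ZMod (p ^ m)) :
    μ (fiber m y) = μ (fiber m (0 : Fin n → ZMod (p ^ m))) := by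
  rw [fiber_eq' m y, fiber_eq' m 0]
  have h0 : lift' m (0 : Fin n → ZMod (p ^ m)) = 0 := by
    funext i; simp [lift']
  rw [h0]
  have : {x : Fin n → ℤ_[p] | ∀ i, ‖x i - lift' m y i‖ ≤ (p : ℝ) ^ (-(m:ℤ))} =
      (fun x : Fin n → ℤ_[p] => -lift' m y + x) ⁻¹'
        {x : Fin n → ℤ_[p] | ∀ i, ‖x i - (0 : Fin n → ℤ_[p]) i‖ ≤ (p : ℝ) ^ (-(m:ℤ))} := by
    ext x
    simp only [Set.mem_preimage, Set.mem_setOf_eq, Pi.add_apply, Pi.neg_apply, Pi.zero_apply,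
      sub_zero]
    exact forall_congr' fun i => by rw [neg_add_eq_sub]
  rw [this, measure_preimage_add]

lemma measure_fiber_zero (m : ℕ) :
    μ (fiber m (0 : Fin n → ZMod (p ^ m))) = ((p : ℝ≥0∞) ^ (m * n))⁻¹ := by
  haveI : NeZero (p ^ m) := ⟨pow_ne_zero m hp.out.ne_zero⟩
  have hdisj : Pairwise (Function.onFun Disjoint (fun y : Fin n → ZMod (p ^ m) => fiber m y)) := by
    intro y y' hyy'
    rw [Function.onFun, Set.disjoint_left]
    intro x hx hx'
    exact hyy' (funext fun i => (hx i).symm.trans (hx' i))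
  have hunion : (⋃ y : Fin n → ZMod (p ^ m), fiber m y) = Set.univ := by
    ext x
    simp only [Set.mem_iUnion, Set.mem_univ, iff_true]
    exact ⟨fun i => PadicInt.toZModPow m (x i), fun i => rfl⟩
  have h1 : (1 : ℝ≥0∞) = ∑' y : Fin n → ZMod (p ^ m), μ (fiber m y) := by
    rw [← measure_iUnion hdisj (fun y => measurableSet_fiber m y), hunion, measure_univ]
  rw [tsum_fintype] at h1
  simp only [measure_fiber μ m] at h1
  rw [Finset.sum_const, Finset.card_univ] at h1
  set κ := μ (fiber m (0 : Fin n → ZMod (p ^ m)))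
  have hcard : (Fintype.card (Fin n → ZMod (p ^ m)) : ℝ≥0∞) = (p : ℝ≥0∞) ^ (m * n) := by
    rw [Fintype.card_fun, ZMod.card, Fintype.card_fin]
    push_cast
    rw [← pow_mul]
  have hc0 : ((p : ℝ≥0∞) ^ (m * n)) ≠ 0 := by
    apply pow_ne_zero
    exact_mod_cast hp.out.ne_zero
  have hctop : ((p : ℝ≥0∞) ^ (m * n)) ≠ ⊤ := by
    exact ENNReal.pow_ne_top (ENNReal.natCast_ne_top p)
  have h2 : (p : ℝ≥0∞) ^ (m * n) * κ = 1 := by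
    rw [← hcard, ← nsmul_eq_mul]; exact h1.symm
  calc κ = (((p : ℝ≥0∞) ^ (m * n))⁻¹ * ((p : ℝ≥0∞) ^ (m * n))) * κ := by
          rw [ENNReal.inv_mul_cancel hc0 hctop, one_mul]
    _ = ((p : ℝ≥0∞) ^ (m * n))⁻¹ * ((p : ℝ≥0∞) ^ (m * n) * κ) := by ring
    _ = ((p : ℝ≥0∞) ^ (m * n))⁻¹ := by rw [h2, mul_one]

lemma measure_lev (f : MvPolynomial (Fin n) ℤ) (m : ℕ) :
    μ (lev f m) = (solCount p n m f : ℝ≥0∞) * ((p : ℝ≥0∞) ^ (m * n))⁻¹ := by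
  classical
  rw [lev_eq_biUnion f m, measure_biUnion_finset ?_ (fun y _ => measurableSet_fiber m y)]
  · rw [solCount_eq_card m f]
    simp only [measure_fiber μ m, measure_fiber_zero μ m, Finset.sum_const, nsmul_eq_mul]
  · intro y _ y' _ hyy'
    rw [Function.onFun, Set.disjoint_left]
    intro x hx hx'
    exact hyy' (funext fun i => (hx i).symm.trans (hx' i))

omit [MeasurableSpace (Fin n → ℤ_[p])] [BorelSpace (Fin n → ℤ_[p])] in
lemma tsum_indicator_lev (f : MvPolynomial (Fin n) ℤ) {s : ℝ} (hs : 0 < s)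
    (x : Fin n → ℤ_[p]) :
    ∑' m : ℕ, (lev f m).indicator (fun _ => ((p:ℝ) ^ (-s)) ^ m) x
      = (1 - (p:ℝ) ^ (-s) * ‖aeval x f‖ ^ s) / (1 - (p:ℝ) ^ (-s)) := by
  have hp1 : (1:ℝ) < p := by exact_mod_cast hp.out.one_lt
  have hp0 : (0:ℝ) < p := lt_trans one_pos hp1
  set r : ℝ := (p:ℝ) ^ (-s) with hr
  have hr0 : 0 < r := Real.rpow_pos_of_pos hp0 _
  have hr1 : r < 1 := Real.rpow_lt_one_of_one_lt_of_neg hp1 (neg_lt_zero.2 hs)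
  by_cases hz : aeval x f = 0
  · have hmem : ∀ m : ℕ, x ∈ lev f m := by
      intro m
      show ‖aeval x f‖ ≤ _
      rw [hz, norm_zero]
      positivity
    have : (fun m : ℕ => (lev f m).indicator (fun _ => r ^ m) x) = fun m => r ^ m := by
      funext m; rw [Set.indicator_of_mem (hmem m)]
    rw [this, tsum_geometric_of_lt_one hr0.le hr1, hz, norm_zero,
      Real.zero_rpow hs.ne', mul_zero, sub_zero, one_div]
  · set z := aeval x f with hzdef
    have hv0 : 0 ≤ (z.valuation : ℤ) := Int.natCast_nonneg _
    set V : ℕ := (z.valuation : ℤ).toNat with hV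
    have hVv : (V : ℤ) = z.valuation := Int.toNat_of_nonneg hv0
    have hnorm : ‖z‖ = (p:ℝ) ^ (-(z.valuation : ℤ)) := PadicInt.norm_eq_zpow_neg_valuation hz
    have hmem : ∀ m : ℕ, x ∈ lev f m ↔ m ≤ V := by
      intro m
      show ‖aeval x f‖ ≤ _ ↔ _
      rw [← hzdef, hnorm, zpow_le_zpow_iff_right₀ hp1, neg_le_neg_iff, ← hVv]
      exact_mod_cast Iff.rfl
    have hind : ∀ m : ℕ, (lev f m).indicator (fun _ => r ^ m) x
        = if m ≤ V then r ^ m else 0 := by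
      intro m
      by_cases h : m ≤ V
      · rw [Set.indicator_of_mem ((hmem m).2 h), if_pos h]
      · rw [Set.indicator_of_notMem (fun hx => h ((hmem m).1 hx)), if_neg h]
    have hsum : ∑' m : ℕ, (lev f m).indicator (fun _ => r ^ m) x
        = ∑ m ∈ Finset.range (V + 1), r ^ m := by
      rw [tsum_eq_sum (s := Finset.range (V + 1))]
      · exact Finset.sum_congr rfl fun m hm => by
          rw [hind m, if_pos (Nat.lt_succ_iff.1 (Finset.mem_range.1 hm))]
      · intro m hm
        rw [hind m, if_neg (fun h => hm (Finset.mem_range.2 (Nat.lt_succ_of_le h)))]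
    have hzs : ‖z‖ ^ s = r ^ V := by
      rw [hnorm, ← hVv, ← Real.rpow_intCast (p:ℝ) (-(V:ℤ)), ← Real.rpow_natCast r V, hr,
        ← Real.rpow_mul hp0.le, ← Real.rpow_mul hp0.le]
      congr 1
      push_cast
      ring
    rw [hsum, geom_sum_eq hr1.ne, hzs, pow_succ]
    have h1 : r - 1 ≠ 0 := sub_ne_zero.2 hr1.ne
    have h2 : (1:ℝ) - r ≠ 0 := sub_ne_zero.2 hr1.ne'
    field_simp
    ring

end IgusaAux

/-- For Igusa's local zeta function `Z_f(s) = ∫_{ℤ_p^n} |f(x)|_p^s dμ` and the Poincaré series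
`P_f(p^{-s}) = ∑_m N_m p^{-(n+s)m}`: for every real `s > 0` the series converges and
`Z_f(s) = p^s + (1 - p^s) · ∑_{m≥0} N_m p^{-(n+s)m}`
(equivalently, `P_f(p^{-s}) = (1 - p^{-s} Z_f(s))/(1 - p^{-s})`). -/
theorem igusa_zeta_eq_poincare_series
    (p : ℕ) [Fact p.Prime] (n : ℕ) (hn : 1 ≤ n)
    (f : MvPolynomial (Fin n) ℤ)
    [MeasurableSpace (Fin n → ℤ_[p])] [BorelSpace (Fin n → ℤ_[p])]
    (μ : Measure (Fin n → ℤ_[p]))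
    [IsProbabilityMeasure μ] [μ.IsAddLeftInvariant]
    (s : ℝ) (hs : 0 < s) :
    Summable (fun m : ℕ => (solCount p n m f : ℝ) * (p : ℝ) ^ (-((n : ℝ) + s) * (m : ℝ))) ∧
      ∫ x : Fin n → ℤ_[p], ‖MvPolynomial.aeval x f‖ ^ s ∂μ =
        (p : ℝ) ^ s + (1 - (p : ℝ) ^ s) *
          ∑' m : ℕ, (solCount p n m f : ℝ) * (p : ℝ) ^ (-((n : ℝ) + s) * (m : ℝ)) := by
  have hp1 : (1:ℝ) < p := by exact_mod_cast (Fact.out : p.Prime).one_lt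
  have hp0 : (0:ℝ) < p := lt_trans one_pos hp1
  set r : ℝ := (p:ℝ) ^ (-s) with hr
  have hr0 : 0 < r := Real.rpow_pos_of_pos hp0 _
  have hr1 : r < 1 := Real.rpow_lt_one_of_one_lt_of_neg hp1 (neg_lt_zero.2 hs)
  -- the level sets and their measures
  set A : ℕ → Set (Fin n → ℤ_[p]) := fun m => IgusaAux.lev f m with hA
  have hAmeas : ∀ m, MeasurableSet (A m) := fun m => IgusaAux.measurableSet_lev f m
  have hμA : ∀ m, (μ (A m)).toReal = (solCount p n m f : ℝ) * (((p:ℝ) ^ (m * n))⁻¹) := by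
    intro m
    rw [hA, IgusaAux.measure_lev μ f m]
    rw [ENNReal.toReal_mul, ENNReal.toReal_inv, ENNReal.toReal_pow, ENNReal.toReal_natCast, ENNReal.toReal_natCast]
  -- identification of the statement's summand with `(μ (A m)).toReal * r ^ m`
  have hterm : ∀ m : ℕ, (solCount p n m f : ℝ) * (p : ℝ) ^ (-((n : ℝ) + s) * (m : ℝ))
      = (μ (A m)).toReal * r ^ m := by
    intro m
    rw [hμA m, mul_assoc]
    congr 1
    rw [← Real.rpow_natCast (p:ℝ) (m * n), ← Real.rpow_neg hp0.le,
      ← Real.rpow_natCast r m, hr, ← Real.rpow_mul hp0.le, ← Real.rpow_add hp0]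
    congr 1
    push_cast
    ring
  -- summability
  have hμA1 : ∀ m, (μ (A m)).toReal ≤ 1 := by
    intro m
    have := prob_le_one (μ := μ) (s := A m)
    calc (μ (A m)).toReal ≤ (1 : ℝ≥0∞).toReal := ENNReal.toReal_mono (by simp) this
      _ = 1 := by simp
  have hsummable : Summable (fun m : ℕ => (μ (A m)).toReal * r ^ m) := by
    apply Summable.of_nonneg_of_le
      (fun m => mul_nonneg ENNReal.toReal_nonneg (pow_nonneg hr0.le m))
      (fun m => ?_) (summable_geometric_of_lt_one hr0.le hr1)
    calc (μ (A m)).toReal * r ^ m ≤ 1 * r ^ m :=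
          mul_le_mul_of_nonneg_right (hμA1 m) (pow_nonneg hr0.le m)
      _ = r ^ m := one_mul _
  have hsummable' : Summable
      (fun m : ℕ => (solCount p n m f : ℝ) * (p : ℝ) ^ (-((n : ℝ) + s) * (m : ℝ))) := by
    exact hsummable.congr fun m => (hterm m).symm
  refine ⟨hsummable', ?_⟩
  -- the integrand H
  set H : (Fin n → ℤ_[p]) → ℝ := fun x => ‖MvPolynomial.aeval x f‖ ^ s with hH
  have hHcont : Continuous H :=
    (continuous_norm.comp (IgusaAux.continuous_aeval f)).rpow_const fun x => Or.inr hs.le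
  have hHint : Integrable H μ := by
    apply Integrable.mono' (integrable_const (1:ℝ)) hHcont.aestronglyMeasurable
    filter_upwards with x
    rw [Real.norm_eq_abs, abs_of_nonneg (Real.rpow_nonneg (norm_nonneg _) s)]
    exact Real.rpow_le_one (norm_nonneg _) (PadicInt.norm_le_one _) hs.le
  -- the indicator functions
  set F : ℕ → (Fin n → ℤ_[p]) → ℝ := fun m => (A m).indicator (fun _ => r ^ m) with hF
  have hFmeas : ∀ m, AEStronglyMeasurable (F m) μ := fun m =>
    (stronglyMeasurable_const.indicator (hAmeas m)).aestronglyMeasurable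
  have hFlint : ∑' m : ℕ, ∫⁻ x, ‖F m x‖₊ ∂μ ≠ ⊤ := by
    have hle : ∀ m : ℕ, ∫⁻ x, ‖F m x‖₊ ∂μ ≤ (‖r ^ m‖₊ : ℝ≥0∞) := by
      intro m
      calc ∫⁻ x, ‖F m x‖₊ ∂μ ≤ ∫⁻ _, (‖r ^ m‖₊ : ℝ≥0∞) ∂μ := by
            apply lintegral_mono
            intro x
            simp only [hF]
            by_cases hx : x ∈ A m
            · rw [Set.indicator_of_mem hx]
            · rw [Set.indicator_of_notMem hx]; simp
        _ = (‖r ^ m‖₊ : ℝ≥0∞) := by rw [lintegral_const, measure_univ, mul_one]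
    have hsum2 : Summable (fun m : ℕ => ‖r ^ m‖₊) := by
      rw [← NNReal.summable_coe]
      simpa [abs_of_nonneg (pow_nonneg hr0.le _)] using
        summable_geometric_of_lt_one hr0.le hr1
    have : ∑' m : ℕ, (‖r ^ m‖₊ : ℝ≥0∞) ≠ ⊤ := ENNReal.tsum_coe_ne_top_iff_summable.2 hsum2
    exact ne_top_of_le_ne_top this (ENNReal.tsum_le_tsum hle)
  have key := MeasureTheory.integral_tsum hFmeas hFlint
  -- compute each ∫ F m
  have hintF : ∀ m : ℕ, ∫ x, F m x ∂μ = (μ (A m)).toReal * r ^ m := by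
    intro m
    rw [hF]
    simp only []
    rw [MeasureTheory.integral_indicator_const (r ^ m) (hAmeas m), smul_eq_mul, measureReal_def]
  -- compute the lhs of key
  have hlhs : ∫ x, ∑' m : ℕ, F m x ∂μ = (1 - r * ∫ x, H x ∂μ) / (1 - r) := by
    have hptwise : ∀ x, ∑' m : ℕ, F m x = (1 - r * H x) / (1 - r) := fun x =>
      IgusaAux.tsum_indicator_lev f hs x
    rw [integral_congr_ae (ae_of_all _ hptwise)]
    have : (fun x => (1 - r * H x) / (1 - r)) = fun x => (1 - r)⁻¹ * (1 - r * H x) := by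
      funext x; rw [div_eq_inv_mul]
    rw [this, MeasureTheory.integral_const_mul, integral_sub (integrable_const 1) (hHint.const_mul r),
      MeasureTheory.integral_const_mul, integral_const, probReal_univ]
    simp [div_eq_inv_mul]
  -- put it together
  set Z : ℝ := ∫ x, H x ∂μ with hZ
  set P : ℝ := ∑' m : ℕ, (solCount p n m f : ℝ) * (p : ℝ) ^ (-((n : ℝ) + s) * (m : ℝ)) with hP
  have hPeq : P = ∑' m : ℕ, (μ (A m)).toReal * r ^ m := tsum_congr hterm
  have keyeq : (1 - r * Z) / (1 - r) = P := by
    rw [← hlhs, key, hPeq]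
    exact tsum_congr hintF
  have hps : (p:ℝ) ^ s = r⁻¹ := by
    rw [hr, ← Real.rpow_neg hp0.le, neg_neg]
  show Z = (p:ℝ) ^ s + (1 - (p:ℝ) ^ s) * P
  rw [hps]
  have h2 : (1:ℝ) - r ≠ 0 := sub_ne_zero.2 hr1.ne'
  have keyeq2 : 1 - r * Z = (1 - r) * P := by
    field_simp at keyeq
    linarith [keyeq]
  have hrne : r ≠ 0 := hr0.ne'
  field_simp
  linear_combination (-(1:ℝ)) * keyeq2
end

section
/- Let n ≥ 1, p a prime, and k ≥ 0. The number of additive subgroups of ℤ^n of index p^k is finite and equals ∑ p^{∑_{i=1}^{n} (i−1)·m_i}, where the sum runs over all tuples (m_1,…,m_n) ∈ ℕ^n of non-negative integers with m_1 + … + m_n = k. -/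
open Finset

namespace CardSub

variable {A : Type*} [AddCommGroup A]

/-- The subgroup `{(t*d, t•a₀ + k) | t : ℤ, k ∈ K}` of `ℤ × A`. -/
def sect (d : ℕ) (a₀ : A) (K : AddSubgroup A) : AddSubgroup (ℤ × A) where
  carrier := {z | ∃ t : ℤ, z.1 = t * d ∧ z.2 - t • a₀ ∈ K}
  zero_mem' := ⟨0, by simp, by simpa using K.zero_mem⟩
  add_mem' := by
    rintro ⟨x, a⟩ ⟨y, b⟩ ⟨s, hs, hsa⟩ ⟨t, ht, htb⟩
    refine ⟨s + t, by simp only [add_mul]; exact congrArg₂ (·+·) hs ht, ?_⟩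
    have h := K.add_mem hsa htb
    have : (a + b) - (s + t) • a₀ = a - s • a₀ + (b - t • a₀) := by
      rw [add_smul]; abel
    simpa [this] using h
  neg_mem' := by
    rintro ⟨x, a⟩ ⟨t, ht, hta⟩
    refine ⟨-t, by simp only [neg_mul]; exact congrArg Neg.neg ht, ?_⟩
    have h := K.neg_mem hta
    have heq : (-a) - (-t) • a₀ = -(a - t • a₀) := by rw [neg_smul]; abel
    rw [show ((-(x,a)).2 : A) = -a from rfl, heq]
    exact h

theorem mem_sect {d : ℕ} {a₀ : A} {K : AddSubgroup A} {z : ℤ × A} :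
    z ∈ sect d a₀ K ↔ ∃ t : ℤ, z.1 = t * d ∧ z.2 - t • a₀ ∈ K := Iff.rfl


variable {d d' : ℕ} {a₀ a₀' : A} {K K' : AddSubgroup A}

noncomputable def quotEquiv (hd : d ≠ 0) :
    ((ℤ × A) ⧸ sect d a₀ K) ≃ ZMod d × (A ⧸ K) := by
  have hd' : (d : ℤ) ≠ 0 := by exact_mod_cast hd
  haveI : NeZero d := ⟨hd⟩
  refine Equiv.ofBijective
    (fun q => Quotient.liftOn' q
      (fun z => ((z.1 : ZMod d), QuotientAddGroup.mk (z.2 - (z.1 / d) • a₀)))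
      ?_) ⟨?_, ?_⟩
  · rintro ⟨x, a⟩ ⟨y, b⟩ h
    rw [QuotientAddGroup.leftRel_apply, mem_sect] at h
    obtain ⟨t, ht, hta⟩ := h
    have hy : y = x + t * d := by
      have h1 : (-(x, a) + (y, b)).1 = y - x := by simp; ring
      rw [h1] at ht; linarith
    subst hy
    simp only [Prod.mk.injEq]
    constructor
    · push_cast; simp [ZMod.natCast_self]
    · have hdiv : (x + t * d) / d = x / d + t := Int.add_mul_ediv_right x t hd'
      rw [hdiv, QuotientAddGroup.eq]
      have h2 : (-(x, a) + (x + t * d, b)).2 = b - a := by simp [neg_add_eq_sub]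
      rw [h2] at hta
      have heq : -(a - (x / d) • a₀) + (b - (x / d + t) • a₀) = (b - a) - t • a₀ := by
        rw [add_smul]; abel
      rw [heq]; exact hta
  · rintro q₁ q₂ h
    obtain ⟨⟨x, a⟩, rfl⟩ := QuotientAddGroup.mk_surjective q₁
    obtain ⟨⟨y, b⟩, rfl⟩ := QuotientAddGroup.mk_surjective q₂
    simp only [Quotient.liftOn'_mk, Prod.mk.injEq] at h
    obtain ⟨h1, h2⟩ := h
    rw [ZMod.intCast_eq_intCast_iff] at h1
    obtain ⟨t, htt⟩ := h1.dvd
    have hy : y = x + t * d := by linarith [htt]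
    subst hy
    apply Quotient.sound'
    rw [QuotientAddGroup.leftRel_apply, mem_sect]
    refine ⟨t, by simp, ?_⟩
    have hdiv : (x + t * d) / d = x / d + t := Int.add_mul_ediv_right x t hd'
    rw [hdiv] at h2
    rw [QuotientAddGroup.eq] at h2
    have heq : -(a - (x / d) • a₀) + (b - (x / d + t) • a₀) = (b - a) - t • a₀ := by
      rw [add_smul]; abel
    rw [heq] at h2
    have : (-(x, a) + (x + t * d, b)).2 = b - a := by simp [neg_add_eq_sub]
    rw [this]; exact h2
  · rintro ⟨r, c⟩
    refine ⟨QuotientAddGroup.mk ((r.val : ℤ), Quotient.out c), ?_⟩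
    simp only [Quotient.liftOn'_mk]
    have h1 : ((r.val : ℤ) : ZMod d) = r := by
      push_cast; exact ZMod.natCast_rightInverse r
    have h2 : ((r.val : ℤ)) / (d : ℤ) = 0 :=
      Int.ediv_eq_zero_of_lt (by positivity) (by exact_mod_cast r.val_lt)
    rw [Prod.mk.injEq]
    exact ⟨h1, by rw [h2, zero_smul, sub_zero]; exact QuotientAddGroup.out_eq' c⟩

theorem index_sect (hd : d ≠ 0) : (sect d a₀ K).index = d * K.index := by
  rw [AddSubgroup.index_eq_card, Nat.card_congr (quotEquiv hd), Nat.card_prod,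
    Nat.card_zmod, AddSubgroup.index_eq_card]

theorem sect_congr (h : a₀ - a₀' ∈ K) : sect d a₀ K = sect d a₀' K := by
  ext ⟨x, a⟩
  simp only [mem_sect]
  constructor <;> rintro ⟨t, ht, hta⟩ <;> refine ⟨t, ht, ?_⟩
  · have := K.add_mem hta (K.zsmul_mem h t)
    have heq : a - t • a₀ + t • (a₀ - a₀') = a - t • a₀' := by
      rw [smul_sub]; abel
    rwa [heq] at this
  · have := K.sub_mem hta (K.zsmul_mem h t)
    have heq : a - t • a₀' - t • (a₀ - a₀') = a - t • a₀ := by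
      rw [smul_sub]; abel
    rwa [heq] at this

theorem inr_mem_sect_iff (hd : d ≠ 0) {a : A} : ((0 : ℤ), a) ∈ sect d a₀ K ↔ a ∈ K := by
  simp only [mem_sect]
  constructor
  · rintro ⟨t, ht, hta⟩
    have ht0 : t = 0 := by
      rcases mul_eq_zero.mp ht.symm with h | h
      · exact h
      · exact absurd (by exact_mod_cast h) hd
    simpa [ht0] using hta
  · intro ha; exact ⟨0, by simp, by simpa using ha⟩

theorem self_mem_sect : ((d : ℤ), a₀) ∈ sect d a₀ K :=
  mem_sect.mpr ⟨1, by simp, by simpa using K.zero_mem⟩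

theorem sect_inj (hd : d ≠ 0) (hd' : d' ≠ 0)
    (h : sect d a₀ K = sect d' a₀' K') : d = d' ∧ K = K' ∧ a₀ - a₀' ∈ K' := by
  have hdvd : ∀ {e e' : ℕ} {b b' : A} {L L' : AddSubgroup A},
      sect e b L = sect e' b' L' → e' ∣ e := by
    intro e e' b b' L L' hh
    have := hh ▸ (self_mem_sect (d := e) (a₀ := b) (K := L))
    obtain ⟨t, ht, -⟩ := mem_sect.mp this
    exact Int.ofNat_dvd.mp ⟨t, by rw [mul_comm]; exact ht⟩
  have hdd' : d = d' := Nat.dvd_antisymm (hdvd h.symm) (hdvd h)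
  subst hdd'
  have hK : K = K' := by
    ext a
    rw [← inr_mem_sect_iff (a₀ := a₀) hd, h, inr_mem_sect_iff hd]
  have := h ▸ (self_mem_sect (d := d) (a₀ := a₀) (K := K))
  obtain ⟨t, ht, hta⟩ := mem_sect.mp this
  have ht1 : t = 1 := by
    have : (d : ℤ) ≠ 0 := by exact_mod_cast hd
    have ht' : (d : ℤ) = t * d := ht
    exact mul_right_cancel₀ this (ht'.symm.trans (one_mul _).symm)
  subst ht1
  rw [one_smul] at hta
  exact ⟨rfl, hK, hta⟩

theorem exists_sect (H : AddSubgroup (ℤ × A)) (hH : H.index ≠ 0) :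
    ∃ (d : ℕ) (a₀ : A) (K : AddSubgroup A), d ≠ 0 ∧ H = sect d a₀ K := by
  classical
  set J : AddSubgroup ℤ := H.map (AddMonoidHom.fst ℤ A) with hJ
  have hHle : H ≤ J.comap (AddMonoidHom.fst ℤ A) := fun z hz => AddSubgroup.mem_map_of_mem _ hz
  have hJind : J.index ≠ 0 := by
    rw [← AddSubgroup.index_comap_of_surjective J (f := AddMonoidHom.fst ℤ A) Prod.fst_surjective]
    exact fun h0 => hH (Nat.eq_zero_of_zero_dvd (h0 ▸ AddSubgroup.index_dvd_of_le hHle))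
  obtain ⟨g, hg⟩ := Int.subgroup_cyclic J
  rw [← AddSubgroup.zmultiples_eq_closure] at hg
  have hgne : g ≠ 0 := by
    rintro rfl
    rw [hg] at hJind
    simpa [Int.index_zmultiples] using hJind
  set d : ℕ := g.natAbs with hd
  have hdne : d ≠ 0 := Int.natAbs_ne_zero.mpr hgne
  have hJd : J = AddSubgroup.zmultiples (d : ℤ) := by
    rw [hg]
    rcases Int.natAbs_eq g with he | he
    · rw [← he]
    · rw [show (d : ℤ) = -g by omega]
      ext x
      simp only [AddSubgroup.mem_zmultiples_iff]
      constructor <;> rintro ⟨t, rfl⟩ <;> exact ⟨-t, by simp⟩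
  have hdJ : (d : ℤ) ∈ J := hJd ▸ AddSubgroup.mem_zmultiples _
  obtain ⟨⟨x, a₀⟩, hzH, hz1⟩ := hdJ
  simp only [AddMonoidHom.coe_fst] at hz1
  subst hz1
  refine ⟨d, a₀, H.comap (AddMonoidHom.inr ℤ A), hdne, ?_⟩
  ext ⟨x, b⟩
  rw [mem_sect]
  constructor
  · intro hx
    have hxJ : x ∈ J := ⟨(x, b), hx, rfl⟩
    rw [hJd, AddSubgroup.mem_zmultiples_iff] at hxJ
    obtain ⟨t, ht⟩ := hxJ
    refine ⟨t, by rw [← ht]; simp [mul_comm], ?_⟩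
    have := H.sub_mem hx (H.zsmul_mem hzH t)
    have heq : ((x, b) : ℤ × A) - t • ((d : ℤ), a₀) = (x - t * d, b - t • a₀) := by
      simp [mul_comm]
    rw [heq] at this
    have hx0 : x - t * d = 0 := by rw [← ht]; simp [mul_comm]
    rw [hx0] at this
    exact this
  · rintro ⟨t, rfl, htb⟩
    have h1 : ((0 : ℤ), b - t • a₀) ∈ H := htb
    have := H.add_mem (H.zsmul_mem hzH t) h1
    have heq : t • ((d : ℤ), a₀) + ((0 : ℤ), b - t • a₀) = (t * d, b) := by
      simp [mul_comm]
    rwa [heq] at this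

variable (A) in
noncomputable def Phi (p k : ℕ) (hp : p.Prime)
    (x : Σ j : Fin (k + 1), Σ K : {K : AddSubgroup A // K.index = p ^ (j : ℕ)},
        A ⧸ (K : AddSubgroup A)) :
    {H : AddSubgroup (ℤ × A) // H.index = p ^ k} :=
  ⟨sect (p ^ (k - (x.1 : ℕ))) x.2.2.out x.2.1.1, by
    rw [index_sect (pow_ne_zero _ hp.ne_zero), x.2.1.2, ← pow_add]
    congr 1
    omega⟩

theorem Phi_bijective (p k : ℕ) (hp : p.Prime) :
    Function.Bijective (Phi A p k hp) := by
  constructor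
  · rintro ⟨⟨j, hj⟩, ⟨K, hK⟩, c⟩ ⟨⟨j', hj'⟩, ⟨K', hK'⟩, c'⟩ h
    simp only [Phi, Subtype.mk.injEq] at h
    obtain ⟨hd, hKK, hcc⟩ :=
      sect_inj (pow_ne_zero _ hp.ne_zero) (pow_ne_zero _ hp.ne_zero) h
    have hjj : j = j' := by
      have := Nat.pow_right_injective hp.two_le hd
      omega
    subst hjj
    subst hKK
    have hc : c = c' := by
      have h1 : (QuotientAddGroup.mk c.out : A ⧸ K) = QuotientAddGroup.mk c'.out := by
        rw [QuotientAddGroup.eq]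
        have : -c.out + c'.out = -(c.out - c'.out) := by abel
        rw [this]
        exact K.neg_mem hcc
      exact (QuotientAddGroup.out_eq' c).symm.trans (h1.trans (QuotientAddGroup.out_eq' c'))
    subst hc
    rfl
  · rintro ⟨H, hH⟩
    have hHne : H.index ≠ 0 := by
      rw [hH]; exact pow_ne_zero _ hp.ne_zero
    obtain ⟨d, a₀, K, hd, rfl⟩ := exists_sect H hHne
    rw [index_sect hd] at hH
    obtain ⟨m, hmk, rfl⟩ := (Nat.dvd_prime_pow hp).mp ⟨K.index, hH.symm⟩
    have hKind : K.index = p ^ (k - m) := by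
      have h1 : p ^ m * K.index = p ^ m * p ^ (k - m) := by
        rw [hH, ← pow_add]
        congr 1
        omega
      exact Nat.eq_of_mul_eq_mul_left (pow_pos hp.pos m) h1
    refine ⟨⟨⟨k - m, by omega⟩, ⟨K, hKind⟩, QuotientAddGroup.mk a₀⟩, ?_⟩
    apply Subtype.ext
    simp only [Phi]
    have hkm : k - (k - m) = m := by omega
    rw [hkm]
    apply sect_congr
    have h1 : (QuotientAddGroup.mk (QuotientAddGroup.mk a₀ : A ⧸ K).out : A ⧸ K) =
        QuotientAddGroup.mk a₀ := Quotient.out_eq _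
    rw [QuotientAddGroup.eq] at h1
    have : (QuotientAddGroup.mk a₀ : A ⧸ K).out - a₀ =
        -(-(QuotientAddGroup.mk a₀ : A ⧸ K).out + a₀) := by abel
    rw [this]
    exact K.neg_mem h1

theorem step (p k : ℕ) (hp : p.Prime)
    (hfin : ∀ j : ℕ, {K : AddSubgroup A | K.index = p ^ j}.Finite) :
    {H : AddSubgroup (ℤ × A) | H.index = p ^ k}.Finite ∧
      Nat.card {H : AddSubgroup (ℤ × A) // H.index = p ^ k} =
        ∑ j ∈ range (k + 1),
          Nat.card {K : AddSubgroup A // K.index = p ^ j} * p ^ j := by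
  haveI hfin' : ∀ j : ℕ, Finite {K : AddSubgroup A // K.index = p ^ j} := fun j =>
    Set.Finite.to_subtype (hfin j)
  have hqfin : ∀ (j : ℕ) (K : {K : AddSubgroup A // K.index = p ^ j}),
      Finite (A ⧸ (K : AddSubgroup A)) := by
    intro j K
    apply Nat.finite_of_card_ne_zero
    rw [← AddSubgroup.index_eq_card, K.2]
    exact pow_ne_zero _ hp.ne_zero
  haveI : ∀ (j : Fin (k + 1)),
      Finite (Σ K : {K : AddSubgroup A // K.index = p ^ (j : ℕ)},
        A ⧸ (K : AddSubgroup A)) := by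
    intro j
    haveI := hqfin (j : ℕ)
    infer_instance
  haveI hTfin : Finite (Σ j : Fin (k + 1),
      Σ K : {K : AddSubgroup A // K.index = p ^ (j : ℕ)}, A ⧸ (K : AddSubgroup A)) := by
    infer_instance
  haveI hHfin : Finite {H : AddSubgroup (ℤ × A) // H.index = p ^ k} :=
    Finite.of_surjective _ (Phi_bijective p k hp).surjective
  constructor
  · exact Set.finite_coe_iff.mp hHfin
  · rw [← Nat.card_eq_of_bijective _ (Phi_bijective p k hp)]
    classical
    haveI : ∀ (j : Fin (k + 1)) (K : {K : AddSubgroup A // K.index = p ^ (j : ℕ)}),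
        Fintype (A ⧸ (K : AddSubgroup A)) := fun j K =>
      haveI := hqfin (j : ℕ) K; Fintype.ofFinite _
    haveI : ∀ (j : Fin (k + 1)), Fintype {K : AddSubgroup A // K.index = p ^ (j : ℕ)} :=
      fun j => Fintype.ofFinite _
    rw [Nat.card_eq_fintype_card, Fintype.card_sigma, Finset.sum_range]
    refine Finset.sum_congr rfl fun j _ => ?_
    rw [Fintype.card_sigma]
    have hconst : ∀ K : {K : AddSubgroup A // K.index = p ^ (j : ℕ)},
        Fintype.card (A ⧸ (K : AddSubgroup A)) = p ^ (j : ℕ) := by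
      intro K
      rw [← Nat.card_eq_fintype_card, ← AddSubgroup.index_eq_card, K.2]
    simp only [hconst, Finset.sum_const, smul_eq_mul, Finset.card_univ]
    rw [Nat.card_eq_fintype_card]

theorem sum_antidiag (p n k : ℕ) :
    ∑ j ∈ range (k + 1),
        (∑ m ∈ Finset.Nat.antidiagonalTuple n j, p ^ (∑ i : Fin n, (i : ℕ) * m i)) * p ^ j =
      ∑ m ∈ Finset.Nat.antidiagonalTuple (n + 1) k, p ^ (∑ i : Fin (n + 1), (i : ℕ) * m i) := by
  simp only [Finset.sum_mul, ← pow_add]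
  rw [Finset.sum_sigma']
  refine Finset.sum_bij (fun x _ => Fin.cons (k - x.1) x.2) ?_ ?_ ?_ ?_
  · rintro ⟨j, y⟩ hx
    rw [Finset.mem_sigma] at hx
    obtain ⟨hj, hy⟩ := hx
    rw [Finset.mem_range] at hj
    rw [Finset.Nat.mem_antidiagonalTuple] at hy ⊢
    rw [Fin.sum_cons, hy]
    omega
  · rintro ⟨j, y⟩ hx ⟨j', y'⟩ hx' h
    rw [Finset.mem_sigma, Finset.mem_range] at hx hx'
    dsimp only at hx hx' h
    have h0 := congrFun h 0
    simp only [Fin.cons_zero] at h0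
    have hj : j = j' := by omega
    subst hj
    have hy : y = y' := by
      funext i
      have := congrFun h i.succ
      simpa [Fin.cons_succ] using this
    subst hy
    rfl
  · intro x hx
    rw [Finset.Nat.mem_antidiagonalTuple] at hx
    refine ⟨⟨∑ i : Fin n, Fin.tail x i, Fin.tail x⟩, ?_, ?_⟩
    · rw [Finset.mem_sigma, Finset.mem_range, Finset.Nat.mem_antidiagonalTuple]
      have hsum := Fin.sum_univ_succ x
      refine ⟨?_, rfl⟩
      dsimp only
      show (∑ i : Fin n, x i.succ) < k + 1
      omega
    · have hsum := Fin.sum_univ_succ x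
      dsimp only
      have hx0 : k - ∑ i : Fin n, Fin.tail x i = x 0 := by
        show k - ∑ i : Fin n, x i.succ = x 0
        omega
      rw [hx0]
      exact Fin.cons_self_tail x
  · rintro ⟨j, y⟩ hx
    rw [Finset.mem_sigma, Finset.mem_range, Finset.Nat.mem_antidiagonalTuple] at hx
    dsimp only at hx ⊢
    obtain ⟨hj, hy⟩ := hx
    congr 1
    rw [Fin.sum_univ_succ]
    simp only [Fin.cons_zero, Fin.cons_succ, Fin.val_succ, Fin.val_zero, zero_mul, zero_add]
    have : ∀ i : Fin n, ((i : ℕ) + 1) * y i = (i : ℕ) * y i + y i := fun i => by ring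
    rw [Finset.sum_congr rfl fun i _ => this i, Finset.sum_add_distrib, hy]

theorem index_map_addEquiv {G G' : Type*} [AddGroup G] [AddGroup G'] (e : G ≃+ G')
    (H : AddSubgroup G) : (H.map e.toAddMonoidHom).index = H.index := by
  rw [AddSubgroup.map_equiv_eq_comap_symm']
  exact AddSubgroup.index_comap_of_surjective _ e.symm.surjective

theorem map_map_addEquiv {G G' : Type*} [AddGroup G] [AddGroup G'] (e : G ≃+ G')
    (H : AddSubgroup G) : (H.map e.toAddMonoidHom).map e.symm.toAddMonoidHom = H := by
  ext x
  simp [AddSubgroup.mem_map]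

/-- transporting subgroups of fixed index along an `AddEquiv`. -/
def subtypeIndexEquiv {G G' : Type*} [AddGroup G] [AddGroup G'] (e : G ≃+ G') (q : ℕ) :
    {H : AddSubgroup G // H.index = q} ≃ {H' : AddSubgroup G' // H'.index = q} where
  toFun H := ⟨H.1.map e.toAddMonoidHom, (index_map_addEquiv e H.1).trans H.2⟩
  invFun H' := ⟨H'.1.map e.symm.toAddMonoidHom, (index_map_addEquiv e.symm H'.1).trans H'.2⟩
  left_inv H := Subtype.ext (map_map_addEquiv e H.1)
  right_inv H' := Subtype.ext (by
    have h := map_map_addEquiv e.symm H'.1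
    rwa [AddEquiv.symm_symm] at h)

/-- `ℤ × (Fin n → ℤ) ≃+ (Fin (n+1) → ℤ)` by `Fin.cons`. -/
def consAddEquiv (n : ℕ) : (ℤ × (Fin n → ℤ)) ≃+ (Fin (n + 1) → ℤ) where
  toFun z := Fin.cons z.1 z.2
  invFun f := (f 0, Fin.tail f)
  left_inv := by rintro ⟨a, g⟩; simp [Fin.tail_cons]
  right_inv := fun f => Fin.cons_self_tail f
  map_add' := by
    rintro ⟨a, g⟩ ⟨b, h⟩
    funext i
    cases i using Fin.cases <;> simp

theorem main (p : ℕ) (hp : p.Prime) (n : ℕ) : ∀ k : ℕ,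
    {H : AddSubgroup (Fin n → ℤ) | H.index = p ^ k}.Finite ∧
      Nat.card {H : AddSubgroup (Fin n → ℤ) // H.index = p ^ k} =
        ∑ m ∈ Finset.Nat.antidiagonalTuple n k, p ^ (∑ i : Fin n, (i : ℕ) * m i) := by
  induction n with
  | zero =>
    intro k
    have hidx : ∀ H : AddSubgroup (Fin 0 → ℤ), H.index = 1 := by
      intro H
      rw [AddSubgroup.index_eq_one]
      ext x
      simp only [AddSubgroup.mem_top, iff_true]
      rw [Subsingleton.elim x 0]
      exact H.zero_mem
    haveI : Subsingleton (AddSubgroup (Fin 0 → ℤ)) :=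
      ⟨fun H K => by
        have h1 := AddSubgroup.index_eq_one.mp (hidx H)
        have h2 := AddSubgroup.index_eq_one.mp (hidx K)
        rw [h1, h2]⟩
    refine ⟨Set.toFinite _, ?_⟩
    rcases k with _ | k
    · rw [Finset.Nat.antidiagonalTuple_zero_zero, Finset.sum_singleton]
      simp only [Finset.univ_eq_empty, Finset.sum_empty, pow_zero]
      rw [Nat.card_eq_one_iff_unique]
      exact ⟨⟨fun H K => Subtype.ext (Subsingleton.elim _ _)⟩, ⟨⊤, by simpa using hidx ⊤⟩⟩
    · rw [Finset.Nat.antidiagonalTuple_zero_succ, Finset.sum_empty]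
      haveI : IsEmpty {H : AddSubgroup (Fin 0 → ℤ) // H.index = p ^ (k + 1)} := by
        refine ⟨fun H => ?_⟩
        have h1 := hidx H.1
        have h2 := H.2
        have : p ^ (k + 1) ≠ 1 := Nat.ne_of_gt (Nat.one_lt_pow k.succ_ne_zero hp.one_lt)
        exact this (h2 ▸ h1)
      exact Nat.card_of_isEmpty
  | succ n IH =>
    intro k
    have hfin : ∀ j : ℕ, {K : AddSubgroup (Fin n → ℤ) | K.index = p ^ j}.Finite :=
      fun j => (IH j).1
    obtain ⟨hfinZA, hcardZA⟩ := step p k hp hfin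
    have e := consAddEquiv n
    have heq := subtypeIndexEquiv e (p ^ k)
    haveI : Finite {H : AddSubgroup (ℤ × (Fin n → ℤ)) // H.index = p ^ k} :=
      by exact Set.finite_coe_iff.mpr hfinZA
    haveI : Finite ↑{H : AddSubgroup (Fin (n + 1) → ℤ) | H.index = p ^ k} := by
      exact Finite.of_equiv _ heq
    refine ⟨Set.finite_coe_iff.mp inferInstance, ?_⟩
    rw [← Nat.card_congr heq, hcardZA, ← sum_antidiag p n k]
    exact Finset.sum_congr rfl fun j _ => by rw [(IH j).2]

end CardSub

/-- The number of additive subgroups of `ℤ^n` of index `p^k` is finite and equals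
`∑ p^{∑_{i=1}^{n} (i-1)·m_i}`, the sum running over all tuples `(m_1,…,m_n) ∈ ℕ^n` with
`m_1 + … + m_n = k` (here the tuples are indexed by `Fin n`, so `i ∈ Fin n` corresponds to
the `(i+1)`-st coordinate and the exponent weight `(i+1)-1 = i`). -/
theorem card_addSubgroups_of_index_prime_pow
    (n : ℕ) (hn : 1 ≤ n) (p : ℕ) (hp : p.Prime) (k : ℕ) :
    {H : AddSubgroup (Fin n → ℤ) | H.index = p ^ k}.Finite ∧
      Nat.card {H : AddSubgroup (Fin n → ℤ) // H.index = p ^ k} =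
        ∑ m ∈ Finset.Nat.antidiagonalTuple n k, p ^ (∑ i : Fin n, (i : ℕ) * m i) := by
  exact CardSub.main p hp n k
end

section
/- Let n ≥ 1 and m ≥ 1. The number of subgroups of index m in ℤ^n is finite and equals ∑ d_1^0 · d_2^1 · d_3^2 ⋯ d_n^{n−1}, where the sum runs over all tuples (d_1,…,d_n) of positive integers with d_1 · d_2 ⋯ d_n = m. -/
open Finset AddSubgroup

section Hsub
variable {A : Type*} [AddCommGroup A]

/-- The subgroup of `A × ℤ` generated by `K × 0` and `(v, d)`. -/
def HsubAux (K : AddSubgroup A) (v : A) (d : ℕ) : AddSubgroup (A × ℤ) :=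
  K.prod ⊥ ⊔ AddSubgroup.zmultiples (v, (d : ℤ))

lemma mem_HsubAux {K : AddSubgroup A} {v : A} {d : ℕ} (x : A × ℤ) :
    x ∈ HsubAux K v d ↔ ∃ j : ℤ, x.2 = j * d ∧ x.1 - j • v ∈ K := by
  constructor
  · intro hx
    rw [HsubAux, AddSubgroup.mem_sup] at hx
    obtain ⟨y, hy, z, hz, hyz⟩ := hx
    obtain ⟨j, rfl⟩ := AddSubgroup.mem_zmultiples_iff.mp hz
    obtain ⟨hy1, hy2⟩ := AddSubgroup.mem_prod.mp hy
    refine ⟨j, ?_, ?_⟩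
    · have : x.2 = y.2 + j * d := by
        rw [← hyz]; simp [Prod.smul_def, zsmul_eq_mul]
      simpa [AddSubgroup.mem_bot.mp hy2] using this
    · have : x.1 = y.1 + j • v := by rw [← hyz]; simp [Prod.smul_def]
      rw [this]; simpa using hy1
  · rintro ⟨j, h2, h1⟩
    rw [HsubAux, AddSubgroup.mem_sup]
    refine ⟨(x.1 - j • v, 0), AddSubgroup.mem_prod.mpr ⟨h1, AddSubgroup.mem_bot.mpr rfl⟩,
      j • (v, (d : ℤ)), AddSubgroup.zsmul_mem_zmultiples _ _, ?_⟩
    ext <;> simp [Prod.smul_def, zsmul_eq_mul, h2.symm]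

lemma HsubAux_congr {K : AddSubgroup A} {v v' : A} (d : ℕ) (h : v - v' ∈ K) :
    HsubAux K v d = HsubAux K v' d := by
  ext x
  rw [mem_HsubAux, mem_HsubAux]
  constructor
  · rintro ⟨j, h2, h1⟩
    refine ⟨j, h2, ?_⟩
    have : x.1 - j • v' = (x.1 - j • v) + j • (v - v') := by
      rw [smul_sub]; abel
    rw [this]; exact K.add_mem h1 (K.zsmul_mem h j)
  · rintro ⟨j, h2, h1⟩
    refine ⟨j, h2, ?_⟩
    have : x.1 - j • v = (x.1 - j • v') + j • (v' - v) := by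
      rw [smul_sub]; abel
    rw [this]; exact K.add_mem h1 (K.zsmul_mem (by simpa using K.neg_mem h) j)

end Hsub

section Main
variable {A : Type*} [AddCommGroup A]

lemma index_HsubAux (K : AddSubgroup A) (v : A) {d : ℕ} (hd : 0 < d) :
    (HsubAux K v d).index = K.index * d := by
  haveI : NeZero d := ⟨hd.ne'⟩
  have hdz : (d : ℤ) ≠ 0 := Int.natCast_ne_zero.mpr hd.ne'
  set f : A × ℤ → (A ⧸ K) × ZMod d :=
    fun x => (QuotientAddGroup.mk (x.1 - (x.2 / d) • v), (x.2 : ZMod d)) with hf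
  have key : ∀ x y : A × ℤ, -x + y ∈ HsubAux K v d → f x = f y := by
    intro x y hxy
    rw [mem_HsubAux] at hxy
    obtain ⟨j, h2, h1⟩ := hxy
    have e2 : (-x + y).2 = -x.2 + y.2 := rfl
    have e1 : (-x + y).1 = -x.1 + y.1 := rfl
    rw [e2] at h2
    rw [e1] at h1
    have hy2 : y.2 = x.2 + j * d := by linarith
    have hdiv : y.2 / d = x.2 / d + j := by
      rw [hy2, Int.add_mul_ediv_right _ _ hdz]
    have h1' : (y.1 - x.1) - j • v ∈ K := by
      convert h1 using 2; abel
    simp only [hf, Prod.mk.injEq]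
    constructor
    · rw [QuotientAddGroup.eq_iff_sub_mem]
      have : x.1 - (x.2 / d) • v - (y.1 - (y.2 / d) • v) = -((y.1 - x.1) - j • v) := by
        rw [hdiv, add_smul]; abel
      rw [this]
      exact K.neg_mem h1'
    · rw [hy2]; push_cast; simp
  set F : ((A × ℤ) ⧸ HsubAux K v d) → (A ⧸ K) × ZMod d :=
    fun q => Quotient.liftOn' q f
      (fun x y h => key x y (QuotientAddGroup.leftRel_apply.mp h)) with hF
  have hbij : Function.Bijective F := by
    constructor
    · intro q q'
      induction q using Quotient.inductionOn'
      induction q' using Quotient.inductionOn'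
      rename_i x y
      intro h
      simp only [hF, Quotient.liftOn'_mk'', hf, Prod.mk.injEq] at h
      obtain ⟨hA, hZ⟩ := h
      apply Quotient.sound'
      rw [QuotientAddGroup.leftRel_apply, mem_HsubAux]
      have : ((y.2 - x.2 : ℤ) : ZMod d) = 0 := by push_cast; rw [sub_eq_zero]; exact hZ.symm
      obtain ⟨j, hj⟩ := (ZMod.intCast_zmod_eq_zero_iff_dvd _ _).mp this
      rw [mul_comm] at hj
      have e2 : (-x + y).2 = -x.2 + y.2 := rfl
      have e1 : (-x + y).1 = -x.1 + y.1 := rfl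
      refine ⟨j, ?_, ?_⟩
      · rw [e2]; linarith
      · have hy2 : y.2 = x.2 + j * d := by linarith
        have hdiv : y.2 / d = x.2 / d + j := by
          rw [hy2, Int.add_mul_ediv_right _ _ hdz]
        rw [QuotientAddGroup.eq_iff_sub_mem] at hA
        have : (-x + y).1 - j • v = -(x.1 - (x.2 / d) • v - (y.1 - (y.2 / d) • v)) := by
          rw [e1, hdiv, add_smul]; abel
        rw [this]
        exact K.neg_mem hA
    · rintro ⟨q, r⟩
      obtain ⟨a, rfl⟩ := QuotientAddGroup.mk_surjective q
      refine ⟨QuotientAddGroup.mk (a, (r.val : ℤ)), ?_⟩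
      simp only [hF, hf, Quotient.liftOn'_mk'']
      have h0 : ((r.val : ℤ)) / (d : ℤ) = 0 :=
        Int.ediv_eq_zero_of_lt (Int.natCast_nonneg _) (by exact_mod_cast ZMod.val_lt r)
      rw [h0]
      simp [ZMod.natCast_val, ZMod.intCast_cast, ZMod.cast_id]
  rw [AddSubgroup.index_eq_card, Nat.card_congr (Equiv.ofBijective F hbij), Nat.card_prod,
    Nat.card_zmod, AddSubgroup.index_eq_card]

lemma fst_mem_HsubAux {K : AddSubgroup A} {v : A} {d : ℕ} (hd : 0 < d) (a : A) :
    (a, (0 : ℤ)) ∈ HsubAux K v d ↔ a ∈ K := by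
  rw [mem_HsubAux]
  constructor
  · rintro ⟨j, h2, h1⟩
    have hj : j = 0 := by
      have : j * d = 0 := h2.symm
      rcases mul_eq_zero.mp this with h | h
      · exact h
      · exact absurd h (Int.natCast_ne_zero.mpr hd.ne')
    simpa [hj] using h1
  · intro ha
    exact ⟨0, by simp, by simpa using ha⟩

lemma self_mem_HsubAux (K : AddSubgroup A) (v : A) (d : ℕ) :
    (v, (d : ℤ)) ∈ HsubAux K v d :=
  (mem_HsubAux _).mpr ⟨1, by simp, by simpa using K.zero_mem⟩

lemma HsubAux_inj {K K' : AddSubgroup A} {v v' : A} {d d' : ℕ} (hd : 0 < d) (hd' : 0 < d')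
    (h : HsubAux K v d = HsubAux K' v' d') : d = d' ∧ K = K' ∧ v - v' ∈ K := by
  obtain ⟨j, hj2, hj1⟩ := (mem_HsubAux (K := K') (v, (d : ℤ))).mp
    (h ▸ self_mem_HsubAux K v d)
  obtain ⟨j', hj2', hj1'⟩ := (mem_HsubAux (K := K) (v', (d' : ℤ))).mp
    (h.symm ▸ self_mem_HsubAux K' v' d')
  dsimp only at hj2 hj1 hj2' hj1'
  have hdz : (0 : ℤ) < d := by exact_mod_cast hd
  have hdz' : (0 : ℤ) < d' := by exact_mod_cast hd'
  have hjpos : 0 < j := by nlinarith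
  have hjpos' : 0 < j' := by nlinarith
  have hjj' : j * (j' * d) = d := by rw [← hj2']; exact hj2.symm
  have hj1eq : j = 1 := by nlinarith
  have hdd : d = d' := by
    have : (d : ℤ) = d' := by rw [hj2, hj1eq, one_mul]
    exact_mod_cast this
  have hvv' : v - v' ∈ K' := by simpa [hj1eq] using hj1
  have hKK' : K = K' := by
    ext a
    rw [← fst_mem_HsubAux (v := v) hd a, ← fst_mem_HsubAux (v := v') hd' a, h]
  exact ⟨hdd, hKK', hKK' ▸ hvv'⟩

lemma HsubAux_surj (H : AddSubgroup (A × ℤ)) (hH : H.index ≠ 0) :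
    ∃ (K : AddSubgroup A) (v : A) (d : ℕ), 0 < d ∧ K.index * d = H.index ∧
      H = HsubAux K v d := by
  set D : AddSubgroup ℤ := H.map (AddMonoidHom.snd A ℤ) with hD
  have hsnd : Function.Surjective (AddMonoidHom.snd A ℤ) := fun t => ⟨(0, t), rfl⟩
  have hDindex : D.index ≠ 0 := by
    intro h0
    apply hH
    have hle : H ≤ D.comap (AddMonoidHom.snd A ℤ) := fun x hx => ⟨x, hx, rfl⟩
    have := AddSubgroup.index_dvd_of_le hle
    rw [AddSubgroup.index_comap_of_surjective _ hsnd, h0] at this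
    exact Nat.eq_zero_of_zero_dvd this
  obtain ⟨g, hg⟩ := Int.subgroup_cyclic D
  have hDg : D = AddSubgroup.zmultiples g := by
    rw [hg, ← AddSubgroup.zmultiples_eq_closure]
  have hgne : g ≠ 0 := by
    intro h0
    apply hDindex
    rw [hDg, h0]
    have : AddSubgroup.zmultiples (0 : ℤ) = ⊥ := by
      ext x; simp [AddSubgroup.mem_zmultiples_iff]
    rw [this, AddSubgroup.index_bot]
    exact Nat.card_eq_zero_of_infinite
  set d : ℕ := g.natAbs with hd
  have hdpos : 0 < d := Int.natAbs_pos.mpr hgne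
  have hDd : D = AddSubgroup.zmultiples (d : ℤ) := by rw [hDg, hd, Int.zmultiples_natAbs]
  have hmem : ((d : ℤ)) ∈ D := by rw [hDd]; exact AddSubgroup.mem_zmultiples _
  obtain ⟨x, hxH, hx2⟩ := hmem
  set v : A := x.1 with hv
  set K : AddSubgroup A := H.comap (AddMonoidHom.inl A ℤ) with hK
  have hvd : (v, (d : ℤ)) ∈ H := by
    have : x = (v, (d : ℤ)) := by
      ext
      · rfl
      · exact hx2
    rwa [this] at hxH
  have hmemK : ∀ a : A, a ∈ K ↔ (a, (0 : ℤ)) ∈ H := fun a => Iff.rfl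
  have hHeq : H = HsubAux K v d := by
    ext y
    rw [mem_HsubAux]
    constructor
    · intro hy
      have : y.2 ∈ D := ⟨y, hy, rfl⟩
      rw [hDd, AddSubgroup.mem_zmultiples_iff] at this
      obtain ⟨j, hj⟩ := this
      refine ⟨j, by rw [← hj]; simp [zsmul_eq_mul], ?_⟩
      have hsub : y - j • (v, (d : ℤ)) ∈ H := H.sub_mem hy (H.zsmul_mem hvd j)
      have : y - j • (v, (d : ℤ)) = (y.1 - j • v, (0 : ℤ)) := by
        ext
        · rfl
        · show y.2 - j • (d : ℤ) = 0
          rw [← hj]; simp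
      rwa [this] at hsub
    · rintro ⟨j, h2, h1⟩
      have h0 : (y.1 - j • v, (0 : ℤ)) ∈ H := (hmemK _).mp h1
      have : y = (y.1 - j • v, (0 : ℤ)) + j • (v, (d : ℤ)) := by
        ext
        · show y.1 = y.1 - j • v + j • v
          abel
        · show y.2 = 0 + j • (d : ℤ)
          rw [h2]; simp [zsmul_eq_mul]
      rw [this]
      exact H.add_mem h0 (H.zsmul_mem hvd j)
  refine ⟨K, v, d, hdpos, ?_, hHeq⟩
  rw [hHeq, index_HsubAux _ _ hdpos]

lemma nat_card_sigma {ι : Type*} [Fintype ι] (f : ι → Type*) [∀ i, Finite (f i)] :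
    Nat.card (Σ i, f i) = ∑ i, Nat.card (f i) := by
  letI : ∀ i, Fintype (f i) := fun i => Fintype.ofFinite _
  rw [Nat.card_eq_fintype_card, Fintype.card_sigma]
  exact Finset.sum_congr rfl fun i _ => (Nat.card_eq_fintype_card).symm

lemma step_card (m : ℕ) (hm : m ≠ 0)
    (hfin : ∀ k, k ≠ 0 → Finite {K : AddSubgroup A // K.index = k}) :
    Finite {H : AddSubgroup (A × ℤ) // H.index = m} ∧
      Nat.card {H : AddSubgroup (A × ℤ) // H.index = m} =
        ∑ d ∈ m.divisors, Nat.card {K : AddSubgroup A // K.index = m / d} * (m / d) := by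
  classical
  -- the map
  have hdpos : ∀ d : {d : ℕ // d ∈ m.divisors}, 0 < d.1 :=
    fun d => Nat.pos_of_mem_divisors d.2
  have hddvd : ∀ d : {d : ℕ // d ∈ m.divisors}, d.1 ∣ m :=
    fun d => (Nat.mem_divisors.mp d.2).1
  have hmd : ∀ d : {d : ℕ // d ∈ m.divisors}, m / d.1 ≠ 0 :=
    fun d => by
      have h1 := Nat.le_of_dvd (Nat.pos_of_ne_zero hm) (hddvd d)
      have := Nat.div_pos h1 (hdpos d)
      omega
  set g0 : ∀ (d : {d : ℕ // d ∈ m.divisors}) (K : {K : AddSubgroup A // K.index = m / d.1}),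
      A ⧸ K.1 → AddSubgroup (A × ℤ) := fun d K q =>
    Quotient.liftOn' q (fun v => HsubAux K.1 v d.1)
      (fun v v' h => HsubAux_congr d.1 (by
        have := QuotientAddGroup.leftRel_apply.mp h
        rw [show v - v' = -(-v + v') by abel]
        exact K.1.neg_mem this)) with hg0
  have hg0idx : ∀ d K q, (g0 d K q).index = m := by
    intro d K q
    induction q using Quotient.inductionOn' with
    | h v =>
      show (HsubAux K.1 v d.1).index = m
      rw [index_HsubAux _ _ (hdpos d), K.2, Nat.div_mul_cancel (hddvd d)]
  set g : (Σ d : {d : ℕ // d ∈ m.divisors},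
      Σ K : {K : AddSubgroup A // K.index = m / d.1}, A ⧸ K.1) →
      {H : AddSubgroup (A × ℤ) // H.index = m} :=
    fun x => ⟨g0 x.1 x.2.1 x.2.2, hg0idx _ _ _⟩ with hg
  have hginj : Function.Injective g := by
    rintro ⟨d, K, q⟩ ⟨d', K', q'⟩ h
    induction q using Quotient.inductionOn' with
    | h v =>
    induction q' using Quotient.inductionOn' with
    | h v' =>
      have h' : HsubAux K.1 v d.1 = HsubAux K'.1 v' d'.1 := congrArg Subtype.val h
      obtain ⟨h1, h2, h3⟩ := HsubAux_inj (hdpos d) (hdpos d') h'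
      obtain rfl : d = d' := Subtype.ext h1
      obtain rfl : K = K' := Subtype.ext h2
      have : (Quotient.mk'' v : A ⧸ K.1) = Quotient.mk'' v' := by
        apply Quotient.sound'
        rw [QuotientAddGroup.leftRel_apply]
        rw [show -v + v' = -(v - v') by abel]
        exact K.1.neg_mem h3
      rw [this]
  have hgsurj : Function.Surjective g := by
    rintro ⟨H, hH⟩
    obtain ⟨K, v, d, hd0, hidx, rfl⟩ := HsubAux_surj H (hH ▸ hm)
    have hdvd : d ∣ m := hH ▸ hidx ▸ Dvd.intro_left _ rfl
    have hdmem : d ∈ m.divisors := Nat.mem_divisors.mpr ⟨hdvd, hm⟩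
    have hKidx : K.index = m / d := by
      rw [← hH, ← hidx, Nat.mul_div_cancel _ hd0]
    exact ⟨⟨⟨d, hdmem⟩, ⟨K, hKidx⟩, QuotientAddGroup.mk v⟩, rfl⟩
  -- finiteness
  haveI : ∀ (d : {d : ℕ // d ∈ m.divisors}), Finite {K : AddSubgroup A // K.index = m / d.1} :=
    fun d => hfin _ (hmd d)
  haveI : ∀ (d : {d : ℕ // d ∈ m.divisors}) (K : {K : AddSubgroup A // K.index = m / d.1}),
      Finite (A ⧸ K.1) := by
    intro d K
    have : Nat.card (A ⧸ K.1) ≠ 0 := by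
      rw [← AddSubgroup.index_eq_card, K.2]; exact hmd d
    exact (Nat.card_ne_zero.mp this).2
  have hfinH : Finite {H : AddSubgroup (A × ℤ) // H.index = m} :=
    Finite.of_surjective g hgsurj
  refine ⟨hfinH, ?_⟩
  rw [← Nat.card_eq_of_bijective g ⟨hginj, hgsurj⟩]
  letI : ∀ (d : {d : ℕ // d ∈ m.divisors}), Fintype {K : AddSubgroup A // K.index = m / d.1} :=
    fun d => Fintype.ofFinite _
  rw [nat_card_sigma]
  rw [← Finset.sum_coe_sort m.divisors (fun d => Nat.card {K : AddSubgroup A // K.index = m / d} * (m / d))]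
  apply Finset.sum_congr rfl
  intro d _
  rw [nat_card_sigma]
  have hq : ∀ K : {K : AddSubgroup A // K.index = m / d.1}, Nat.card (A ⧸ K.1) = m / d.1 := by
    intro K
    rw [← AddSubgroup.index_eq_card, K.2]
  simp_rw [hq]
  rw [Finset.sum_const, Finset.card_univ, smul_eq_mul, Nat.card_eq_fintype_card]

end Main

/-- transfer subgroups of given index along an AddEquiv -/
def indexSubtypeEquiv {G G' : Type*} [AddCommGroup G] [AddCommGroup G'] (e : G ≃+ G') (m : ℕ) :
    {H : AddSubgroup G // H.index = m} ≃ {H : AddSubgroup G' // H.index = m} where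
  toFun := fun H => ⟨H.1.comap e.symm.toAddMonoidHom, by
    rw [AddSubgroup.index_comap_of_surjective _ e.symm.surjective, H.2]⟩
  invFun := fun H => ⟨H.1.comap e.toAddMonoidHom, by
    rw [AddSubgroup.index_comap_of_surjective _ e.surjective, H.2]⟩
  left_inv := fun H => by
    apply Subtype.ext
    dsimp only
    rw [AddSubgroup.comap_comap]
    have : (e.symm.toAddMonoidHom.comp e.toAddMonoidHom) = AddMonoidHom.id G := by
      ext x; simp
    rw [this, AddSubgroup.comap_id]
  right_inv := fun H => by
    apply Subtype.ext
    dsimp only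
    rw [AddSubgroup.comap_comap]
    have : (e.toAddMonoidHom.comp e.symm.toAddMonoidHom) = AddMonoidHom.id G' := by
      ext x; simp
    rw [this, AddSubgroup.comap_id]

/-- split off the 0-th coordinate -/
def piSuccAddEquiv (n : ℕ) : (Fin (n + 1) → ℤ) ≃+ ((Fin n → ℤ) × ℤ) where
  toFun := fun f => (fun i => f i.succ, f 0)
  invFun := fun p => Fin.cons p.2 p.1
  left_inv := fun f => Fin.cons_self_tail f
  right_inv := fun p => by
    ext i
    · simp [Fin.cons_succ]
    · simp [Fin.cons_zero]
  map_add' := fun f g => rfl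

lemma sum_identity (n m : ℕ) (hm : m ≠ 0) :
    ∑ d ∈ m.divisors,
        (∑ e ∈ (Fintype.piFinset fun _ : Fin n => (m / d).divisors).filter
            (fun e => ∏ i, e i = m / d), ∏ i : Fin n, e i ^ (i : ℕ)) * (m / d)
      = ∑ f ∈ (Fintype.piFinset fun _ : Fin (n + 1) => m.divisors).filter
            (fun f => ∏ i, f i = m), ∏ i : Fin (n + 1), f i ^ (i : ℕ) := by
  simp_rw [Finset.sum_mul]
  rw [Finset.sum_sigma']
  refine Finset.sum_nbij' (fun x => Fin.cons x.1 x.2) (fun f => ⟨f 0, Fin.tail f⟩)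
    ?_ ?_ ?_ ?_ ?_
  · rintro ⟨d, e⟩ hx
    simp only [Finset.mem_sigma, Finset.mem_filter, Fintype.mem_piFinset] at hx
    obtain ⟨hd, he, hprod⟩ := hx
    have hddvd : d ∣ m := (Nat.mem_divisors.mp hd).1
    simp only [Finset.mem_filter, Fintype.mem_piFinset]
    refine ⟨?_, ?_⟩
    · intro i
      induction i using Fin.cases with
      | zero => simpa using hd
      | succ i =>
        rw [Fin.cons_succ]
        have h1 : e i ∣ m / d := (Nat.mem_divisors.mp (he i)).1
        exact Nat.mem_divisors.mpr ⟨h1.trans (Nat.div_dvd_of_dvd hddvd), hm⟩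
    · rw [Fin.prod_univ_succ, Fin.cons_zero]
      simp_rw [Fin.cons_succ]
      rw [hprod, Nat.mul_div_cancel' hddvd]
  · intro f hf
    simp only [Finset.mem_filter, Fintype.mem_piFinset] at hf
    obtain ⟨hmem, hprod⟩ := hf
    have h0 : f 0 ∣ m := (Nat.mem_divisors.mp (hmem 0)).1
    have h0pos : 0 < f 0 := Nat.pos_of_mem_divisors (hmem 0)
    have htail : ∏ i : Fin n, f i.succ = m / f 0 := by
      rw [← hprod, Fin.prod_univ_succ, Nat.mul_div_cancel_left _ h0pos]
    have hmd : m / f 0 ≠ 0 := by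
      have := Nat.div_pos (Nat.le_of_dvd (Nat.pos_of_ne_zero hm) h0) h0pos
      omega
    simp only [Finset.mem_sigma, Finset.mem_filter, Fintype.mem_piFinset]
    refine ⟨hmem 0, fun i => ?_, ?_⟩
    · refine Nat.mem_divisors.mpr ⟨?_, hmd⟩
      rw [← htail]
      exact Finset.dvd_prod_of_mem _ (Finset.mem_univ i)
    · exact htail
  · rintro ⟨d, e⟩ _
    simp [Fin.tail_cons]
  · intro f _
    exact Fin.cons_self_tail f
  · rintro ⟨d, e⟩ hx
    simp only [Finset.mem_sigma, Finset.mem_filter, Fintype.mem_piFinset] at hx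
    obtain ⟨hd, he, hprod⟩ := hx
    dsimp only
    rw [Fin.prod_univ_succ, Fin.cons_zero, Fin.val_zero, pow_zero, one_mul, ← hprod,
      ← Finset.prod_mul_distrib]
    apply Finset.prod_congr rfl
    intro i _
    rw [Fin.cons_succ, Fin.val_succ, pow_succ]

lemma base_case (m : ℕ) (hm : m ≠ 0) :
    Finite {H : AddSubgroup (Fin 0 → ℤ) // H.index = m} ∧
    Nat.card {H : AddSubgroup (Fin 0 → ℤ) // H.index = m} =
      ∑ d ∈ (Fintype.piFinset fun _ : Fin 0 => m.divisors).filter (fun d => ∏ i, d i = m),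
        ∏ i : Fin 0, d i ^ (i : ℕ) := by
  haveI hss : Subsingleton (Fin 0 → ℤ) := ⟨fun f g => funext fun i => i.elim0⟩
  haveI : Subsingleton (AddSubgroup (Fin 0 → ℤ)) := AddSubgroup.subsingleton_iff.mpr hss
  have hidx : ∀ H : AddSubgroup (Fin 0 → ℤ), H.index = 1 := fun H => by
    rw [Subsingleton.elim H ⊤, AddSubgroup.index_top]
  haveI : Subsingleton {H : AddSubgroup (Fin 0 → ℤ) // H.index = m} :=
    ⟨fun a b => Subtype.ext (Subsingleton.elim _ _)⟩
  refine ⟨Finite.of_subsingleton, ?_⟩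
  have hpi : (Fintype.piFinset fun _ : Fin 0 => m.divisors) = {(fun i => i.elim0)} := by
    rw [Fintype.piFinset_of_isEmpty]
    rw [Finset.eq_singleton_iff_unique_mem]
    exact ⟨Finset.mem_univ _, fun x _ => funext fun i => i.elim0⟩
  rcases eq_or_ne m 1 with rfl | hm1
  · haveI : Nonempty {H : AddSubgroup (Fin 0 → ℤ) // H.index = 1} := ⟨⟨⊤, AddSubgroup.index_top⟩⟩
    rw [Nat.card_eq_one_iff_unique.mpr ⟨inferInstance, inferInstance⟩]
    rw [hpi]
    simp
  · haveI : IsEmpty {H : AddSubgroup (Fin 0 → ℤ) // H.index = m} :=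
      ⟨fun H => hm1 (H.2.symm.trans (hidx H.1))⟩
    rw [Nat.card_of_isEmpty, hpi]
    rw [Finset.filter_singleton]
    simp only [Fin.prod_univ_zero]
    rw [if_neg (fun h => hm1 h.symm)]
    simp


theorem main_aux_card : ∀ n : ℕ, ∀ m : ℕ, m ≠ 0 →
    Finite {H : AddSubgroup (Fin n → ℤ) // H.index = m} ∧
      Nat.card {H : AddSubgroup (Fin n → ℤ) // H.index = m} =
        ∑ d ∈ (Fintype.piFinset fun _ : Fin n => m.divisors).filter
            (fun d => ∏ i, d i = m),
          ∏ i : Fin n, d i ^ (i : ℕ) := by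
  intro n
  induction n with
  | zero => exact base_case
  | succ n ih =>
    intro m hm
    have hfin : ∀ k, k ≠ 0 → Finite {K : AddSubgroup (Fin n → ℤ) // K.index = k} :=
      fun k hk => (ih k hk).1
    obtain ⟨hf, hc⟩ := step_card (A := Fin n → ℤ) m hm hfin
    have E := indexSubtypeEquiv (piSuccAddEquiv n) m
    haveI := hf
    refine ⟨Finite.of_equiv _ E.symm, ?_⟩
    rw [Nat.card_congr E, hc, ← sum_identity n m hm]
    apply Finset.sum_congr rfl
    intro d hd
    have hddvd : d ∣ m := (Nat.mem_divisors.mp hd).1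
    have hdpos : 0 < d := Nat.pos_of_mem_divisors hd
    have hmd : m / d ≠ 0 := by
      have := Nat.div_pos (Nat.le_of_dvd (Nat.pos_of_ne_zero hm) hddvd) hdpos
      omega
    rw [(ih (m / d) hmd).2]

/-- The number of subgroups of index `m` in `ℤ^n` is finite and equals
`∑ d_1^0 d_2^1 ⋯ d_n^{n-1}`, the sum running over all tuples `(d_1,…,d_n)` of positive
integers with `d_1 d_2 ⋯ d_n = m` (the tuples are indexed by `Fin n`, so `i ∈ Fin n`
corresponds to the factor `d_{i+1}^{i}`). -/
theorem card_addSubgroups_of_index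
    (n : ℕ) (hn : 1 ≤ n) (m : ℕ) (hm : 1 ≤ m) :
    {H : AddSubgroup (Fin n → ℤ) | H.index = m}.Finite ∧
      Nat.card {H : AddSubgroup (Fin n → ℤ) // H.index = m} =
        ∑ d ∈ (Fintype.piFinset fun _ : Fin n => m.divisors).filter
            (fun d => ∏ i, d i = m),
          ∏ i : Fin n, d i ^ (i : ℕ) := by
  obtain ⟨h1, h2⟩ := main_aux_card n m (by omega)
  exact ⟨Set.finite_coe_iff.mp h1, h2⟩
end
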